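/- arXiv:0704.0079 — 12 statements merged into one kernel-verified Lean document; each statement's English description precedes it below -/
import Mathlib

section
/- Let n ≥ 1 and let Z be a (1+n)×(1+n) complex matrix written in block form Z = [[z₀, η₁*],[η₂, Z₁]] with z₀ ∈ ℂ, η₁, η₂ ∈ ℂⁿ and Z₁ an n×n matrix. Then Z*JZ = J (where J = diag(1, −Iₙ)) if and only if the following equations hold: ‖η₁‖² = ‖η₂‖² = |z₀|² − 1, Z₁η₁ = conj(z₀)·η₂, Z₁*η₂ = z₀·η₁, Z₁*Z₁ = Iₙ + η₁η₁*, and Z₁Z₁* = Iₙ + η₂η₂*. -/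
open Matrix

lemma star_mul_self_eq (z : ℂ) : star z * z = ((‖z‖ : ℂ)) ^ 2 := by
  rw [Complex.star_def, mul_comm, Complex.mul_conj]
  norm_cast
  rw [Complex.normSq_eq_norm_sq]

lemma blockChar (n : ℕ) (z₀ : ℂ) (η₁ η₂ : Fin n → ℂ) (Z₁ : Matrix (Fin n) (Fin n) ℂ) :
    (Matrix.fromBlocks (fun _ _ => z₀) (fun _ j => star (η₁ j)) (fun i _ => η₂ i) Z₁ :
      Matrix (Unit ⊕ Fin n) (Unit ⊕ Fin n) ℂ)ᴴ *
    (Matrix.fromBlocks 1 0 0 (-1)) *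
    (Matrix.fromBlocks (fun _ _ => z₀) (fun _ j => star (η₁ j)) (fun i _ => η₂ i)) Z₁ =
    Matrix.fromBlocks 1 0 0 (-1) ↔
    ((∑ i, ‖η₂ i‖ ^ 2 = ‖z₀‖ ^ 2 - 1) ∧
     Z₁ᴴ *ᵥ η₂ = z₀ • η₁ ∧
     Z₁ᴴ * Z₁ = 1 + Matrix.vecMulVec η₁ (star η₁)) := by
  change (Matrix.fromBlocks (Matrix.of fun _ _ => z₀) (Matrix.of fun _ j => star (η₁ j)) (Matrix.of fun i _ => η₂ i) Z₁ : Matrix (Unit ⊕ Fin n) (Unit ⊕ Fin n) ℂ)ᴴ * Matrix.fromBlocks 1 0 0 (-1) * (Matrix.fromBlocks (Matrix.of fun _ _ => z₀) (Matrix.of fun _ j => star (η₁ j)) (Matrix.of fun i _ => η₂ i) Z₁ : Matrix (Unit ⊕ Fin n) (Unit ⊕ Fin n) ℂ) = Matrix.fromBlocks 1 0 0 (-1) ↔ _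
  rw [Matrix.fromBlocks_conjTranspose, Matrix.fromBlocks_multiply, Matrix.fromBlocks_multiply,
    Matrix.fromBlocks_inj]
  simp only [Matrix.mul_one, Matrix.mul_zero, Matrix.zero_mul, Matrix.mul_neg, Matrix.one_mul,
    Matrix.neg_mul, add_zero, zero_add]
  constructor
  · rintro ⟨h1, h2, h3, h4⟩
    refine ⟨?_, ?_, ?_⟩
    · have c1 := Matrix.ext_iff.mpr h1 () ()
      simp only [Matrix.of_apply, Matrix.add_apply, Matrix.neg_apply, Matrix.mul_apply, Matrix.conjTranspose_apply,
        Matrix.one_apply_eq, Finset.univ_unique, Finset.sum_singleton, star_mul_self_eq] at c1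
      have c1' : ((∑ i, ‖η₂ i‖ ^ 2 : ℝ) : ℂ) = ((‖z₀‖ ^ 2 - 1 : ℝ) : ℂ) := by
        push_cast
        linear_combination -c1
      exact_mod_cast c1'
    · funext i
      have c3 := Matrix.ext_iff.mpr h3 i ()
      simp only [Matrix.of_apply, Matrix.add_apply, Matrix.neg_apply, Matrix.mul_apply, Matrix.conjTranspose_apply,
        star_star, Finset.univ_unique, Finset.sum_singleton, Matrix.zero_apply] at c3
      simp only [Matrix.mulVec, dotProduct, Matrix.conjTranspose_apply, Pi.smul_apply,
        smul_eq_mul]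
      linear_combination -c3
    · ext i j
      have c4 := Matrix.ext_iff.mpr h4 i j
      simp only [Matrix.of_apply, Matrix.add_apply, Matrix.neg_apply, Matrix.mul_apply, Matrix.conjTranspose_apply,
        star_star, Finset.univ_unique, Finset.sum_singleton] at c4
      simp only [Matrix.add_apply, Matrix.mul_apply, Matrix.conjTranspose_apply,
        Matrix.vecMulVec_apply, Pi.star_apply]
      linear_combination -c4
  · rintro ⟨q1, q2, q3⟩
    have q2' : ∀ j, ∑ x, star (Z₁ x j) * η₂ x = z₀ * η₁ j := by
      intro j
      have := congrFun q2 j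
      simpa [Matrix.mulVec, dotProduct, Matrix.conjTranspose_apply] using this
    refine ⟨?_, ?_, ?_, ?_⟩
    · ext i j
      have c : ((∑ i, ‖η₂ i‖ ^ 2 : ℝ) : ℂ) = ((‖z₀‖ ^ 2 - 1 : ℝ) : ℂ) := by exact_mod_cast q1
      push_cast at c
      simp only [Matrix.of_apply, Matrix.add_apply, Matrix.neg_apply, Matrix.mul_apply, Matrix.conjTranspose_apply,
        Matrix.one_apply_eq, Finset.univ_unique, Finset.sum_singleton, star_mul_self_eq]
      linear_combination -c
    · ext i j
      have c := congrArg star (q2' j)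
      simp only [star_sum, StarMul.star_mul, star_star] at c
      simp only [Matrix.of_apply, Matrix.add_apply, Matrix.neg_apply, Matrix.mul_apply, Matrix.conjTranspose_apply,
        Finset.univ_unique, Finset.sum_singleton, Matrix.zero_apply]
      linear_combination -c
    · ext i j
      have c := q2' i
      simp only [Matrix.of_apply, Matrix.add_apply, Matrix.neg_apply, Matrix.mul_apply, Matrix.conjTranspose_apply,
        star_star, Finset.univ_unique, Finset.sum_singleton, Matrix.zero_apply]
      linear_combination -c
    · ext i j
      have c := Matrix.ext_iff.mpr q3 i j
      simp only [Matrix.add_apply, Matrix.mul_apply, Matrix.conjTranspose_apply,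
        Matrix.vecMulVec_apply, Pi.star_apply] at c
      simp only [Matrix.of_apply, Matrix.add_apply, Matrix.neg_apply, Matrix.mul_apply, Matrix.conjTranspose_apply,
        star_star, Finset.univ_unique, Finset.sum_singleton]
      linear_combination -c

lemma flipU {m : Type*} [Fintype m] [DecidableEq m] (J Z : Matrix m m ℂ)
    (hJ : J * J = 1) (h : Zᴴ * J * Z = J) : Z * J * Zᴴ = J := by
  have h1 : (J * Zᴴ * J) * Z = 1 := by
    calc (J * Zᴴ * J) * Z = J * (Zᴴ * J * Z) := by simp only [Matrix.mul_assoc]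
      _ = J * J := by rw [h]
      _ = 1 := hJ
  have h2 : Z * (J * Zᴴ * J) = 1 := mul_eq_one_comm.mp h1
  calc Z * J * Zᴴ = (Z * (J * Zᴴ * J)) * J := by
        simp only [Matrix.mul_assoc, hJ, Matrix.mul_one]
    _ = 1 * J := by rw [h2]
    _ = J := Matrix.one_mul J

lemma hZH (n : ℕ) (z₀ : ℂ) (η₁ η₂ : Fin n → ℂ) (Z₁ : Matrix (Fin n) (Fin n) ℂ) :
    (Matrix.fromBlocks (fun _ _ => z₀) (fun _ j => star (η₁ j)) (fun i _ => η₂ i) Z₁ :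
      Matrix (Unit ⊕ Fin n) (Unit ⊕ Fin n) ℂ)ᴴ =
    Matrix.fromBlocks (fun _ _ => star z₀) (fun _ j => star (η₂ j)) (fun i _ => η₁ i) Z₁ᴴ := by
  change (Matrix.fromBlocks (Matrix.of fun _ _ => z₀) (Matrix.of fun _ j => star (η₁ j)) (Matrix.of fun i _ => η₂ i) Z₁ : Matrix (Unit ⊕ Fin n) (Unit ⊕ Fin n) ℂ)ᴴ = Matrix.fromBlocks (Matrix.of fun _ _ => star z₀) (Matrix.of fun _ j => star (η₂ j)) (Matrix.of fun i _ => η₁ i) Z₁ᴴ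
  rw [Matrix.fromBlocks_conjTranspose]
  ext i j
  rcases i with i | i <;> rcases j with j | j <;>
    simp [Matrix.conjTranspose_apply]

lemma hJJ (n : ℕ) :
    (Matrix.fromBlocks 1 0 0 (-1) : Matrix (Unit ⊕ Fin n) (Unit ⊕ Fin n) ℂ) *
      Matrix.fromBlocks 1 0 0 (-1) = 1 := by
  rw [Matrix.fromBlocks_multiply]
  simp [← Matrix.fromBlocks_one]

/-- characterization of block matrices in U(1,n):
`Z*JZ = J` iff the five block equations hold. -/
theorem stmt_1 (n : ℕ) (hn : 1 ≤ n) (z₀ : ℂ) (η₁ η₂ : Fin n → ℂ)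
    (Z₁ : Matrix (Fin n) (Fin n) ℂ)
    (Z : Matrix (Unit ⊕ Fin n) (Unit ⊕ Fin n) ℂ)
    (hZ : Z = Matrix.fromBlocks (fun _ _ => z₀) (fun _ j => star (η₁ j))
      (fun i _ => η₂ i) Z₁)
    (J : Matrix (Unit ⊕ Fin n) (Unit ⊕ Fin n) ℂ)
    (hJ : J = Matrix.fromBlocks 1 0 0 (-1)) :
    Zᴴ * J * Z = J ↔
      ((∑ i, ‖η₁ i‖ ^ 2 = ‖z₀‖ ^ 2 - 1) ∧
       (∑ i, ‖η₂ i‖ ^ 2 = ‖z₀‖ ^ 2 - 1) ∧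
       Z₁ *ᵥ η₁ = (starRingEnd ℂ) z₀ • η₂ ∧
       Z₁ᴴ *ᵥ η₂ = z₀ • η₁ ∧
       Z₁ᴴ * Z₁ = 1 + Matrix.vecMulVec η₁ (star η₁) ∧
       Z₁ * Z₁ᴴ = 1 + Matrix.vecMulVec η₂ (star η₂)) := by
  subst hZ hJ
  have key : ∀ (W : Matrix (Unit ⊕ Fin n) (Unit ⊕ Fin n) ℂ),
      Wᴴ * Matrix.fromBlocks 1 0 0 (-1) * W = Matrix.fromBlocks 1 0 0 (-1) ↔
      (Wᴴ * Matrix.fromBlocks 1 0 0 (-1) * W = Matrix.fromBlocks 1 0 0 (-1) ∧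
       Wᴴᴴ * Matrix.fromBlocks 1 0 0 (-1) * Wᴴ = Matrix.fromBlocks 1 0 0 (-1)) := by
    intro W
    constructor
    · intro h
      refine ⟨h, ?_⟩
      rw [Matrix.conjTranspose_conjTranspose]
      exact flipU _ _ (hJJ n) h
    · exact fun h => h.1
  rw [key]
  rw [blockChar n z₀ η₁ η₂ Z₁]
  rw [hZH n z₀ η₁ η₂ Z₁, blockChar n (star z₀) η₂ η₁ Z₁ᴴ]
  rw [Matrix.conjTranspose_conjTranspose]
  have e1 : ‖star z₀‖ = ‖z₀‖ := norm_star z₀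
  have e2 : (starRingEnd ℂ) z₀ = star z₀ := rfl
  rw [e1, e2]
  tauto
end

section
/- Let n ≥ 1, let α ∈ ℂⁿ with ‖α‖ < 1, and set x₀ = (1−‖α‖²)^{−1/2}, η = x₀·α, and X₁ = (Iₙ + ηη*)^{1/2} (positive semidefinite square root). Then for every λ in the open Euclidean unit ball 𝔹ₙ of ℂⁿ the denominator x₀ + ⟨λ,η⟩ is nonzero, and the map θ(λ) = (X₁λ + η)/(x₀ + ⟨λ,η⟩) is a bijection of 𝔹ₙ onto itself. -/
open Matrix ComplexOrder

/-- the Möbius-type map `θ(λ) = (X₁λ + η)/(x₀ + ⟨λ,η⟩)` has nonvanishing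
denominator on the open unit ball of ℂⁿ and is a bijection of the ball onto itself. -/
theorem stmt_2 (n : ℕ) (hn : 1 ≤ n) (α : Fin n → ℂ)
    (hα : ∑ i, ‖α i‖ ^ 2 < 1)
    (x₀ : ℝ) (hx₀ : x₀ = (Real.sqrt (1 - ∑ i, ‖α i‖ ^ 2))⁻¹)
    (η : Fin n → ℂ) (hη : η = fun i => (x₀ : ℂ) * α i)
    (hP : (1 + Matrix.vecMulVec η (star η)).PosSemidef)
    (X₁ : Matrix (Fin n) (Fin n) ℂ) (hX₁ : X₁ = (hP.1.eigenvectorUnitary : Matrix (Fin n) (Fin n) ℂ) *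
      diagonal ((↑) ∘ (fun x : ℝ => Real.sqrt x) ∘ hP.1.eigenvalues) *
      (star hP.1.eigenvectorUnitary : Matrix (Fin n) (Fin n) ℂ)) :
    (∀ l : Fin n → ℂ, ∑ i, ‖l i‖ ^ 2 < 1 →
      (x₀ : ℂ) + ∑ i, l i * star (η i) ≠ 0) ∧
    Set.BijOn
      (fun l : Fin n → ℂ =>
        ((x₀ : ℂ) + ∑ i, l i * star (η i))⁻¹ • (X₁ *ᵥ l + η))
      {z : Fin n → ℂ | ∑ i, ‖z i‖ ^ 2 < 1}
      {z : Fin n → ℂ | ∑ i, ‖z i‖ ^ 2 < 1} := by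
  have hs0 : (0:ℝ) ≤ ∑ i, ‖α i‖ ^ 2 := Finset.sum_nonneg fun i _ => sq_nonneg _
  set s : ℝ := ∑ i, ‖α i‖ ^ 2 with hs
  have h1s : 0 < 1 - s := by linarith
  have hx0pos : 0 < x₀ := by
    rw [hx₀]; exact inv_pos.2 (Real.sqrt_pos.2 h1s)
  have hx0sq : x₀ ^ 2 = (1 - s)⁻¹ := by
    rw [hx₀, inv_pow, Real.sq_sqrt h1s.le]
  -- sum of squared norms as a dot product
  have hdsum : ∀ z : Fin n → ℂ, z ⬝ᵥ star z = ((∑ i, ‖z i‖ ^ 2 : ℝ) : ℂ) := by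
    intro z
    simp only [dotProduct, Pi.star_apply, Complex.star_def, Complex.mul_conj]
    push_cast
    refine Finset.sum_congr rfl fun i _ => ?_
    norm_cast
    simp [Complex.normSq_eq_norm_sq]
  have hconj : ∀ u w : Fin n → ℂ, u ⬝ᵥ star w = star (w ⬝ᵥ star u) := by
    intro u w
    simp only [dotProduct, star_sum, star_mul', star_star, Pi.star_apply]
    exact Finset.sum_congr rfl fun j _ => by ring
  have hηdot : η ⬝ᵥ star η = (x₀:ℂ) ^ 2 - 1 := by
    have h2 : (∑ i, ‖η i‖ ^ 2 : ℝ) = x₀ ^ 2 * s := by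
      rw [hη, hs]
      simp only [norm_mul, mul_pow, Complex.norm_real, Real.norm_eq_abs, sq_abs]
      rw [← Finset.mul_sum]
    have h3 : x₀ ^ 2 * s = x₀ ^ 2 - 1 := by
      rw [hx0sq]; field_simp; ring
    rw [hdsum, h2, h3]; push_cast; ring
  have hPsd : X₁.PosSemidef := by
    have := (PosSemidef.diagonal (d := (Complex.ofReal ∘ (fun x : ℝ => Real.sqrt x) ∘ hP.1.eigenvalues :
      Fin n → ℂ)) (fun i => Complex.zero_le_real.2 (Real.sqrt_nonneg _))).mul_mul_conjTranspose_same
      (hP.1.eigenvectorUnitary : Matrix (Fin n) (Fin n) ℂ)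
    rw [hX₁, star_eq_conjTranspose]; exact this
  have hherm : X₁ᴴ = X₁ := hPsd.1
  have hsq : X₁ * X₁ = 1 + vecMulVec η (star η) := by
    have hUU : (star hP.1.eigenvectorUnitary : Matrix (Fin n) (Fin n) ℂ) *
        (hP.1.eigenvectorUnitary : Matrix (Fin n) (Fin n) ℂ) = 1 := Unitary.star_mul_self_of_mem hP.1.eigenvectorUnitary.2
    have hDD : diagonal ((↑) ∘ (fun x : ℝ => Real.sqrt x) ∘ hP.1.eigenvalues : Fin n → ℂ) *
        diagonal ((↑) ∘ (fun x : ℝ => Real.sqrt x) ∘ hP.1.eigenvalues : Fin n → ℂ) =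
        diagonal (RCLike.ofReal ∘ hP.1.eigenvalues) := by
      rw [diagonal_mul_diagonal]; congr 1; funext i
      simp only [Function.comp_apply]
      rw [← Complex.ofReal_mul, Real.mul_self_sqrt (hP.eigenvalues_nonneg i)]; rfl
    rw [hX₁]
    conv_rhs => rw [hP.1.spectral_theorem, Unitary.conjStarAlgAut_apply]
    simp only [mul_assoc]
    rw [← mul_assoc _ (hP.1.eigenvectorUnitary : Matrix (Fin n) (Fin n) ℂ), hUU, one_mul,
      ← mul_assoc (diagonal _) (diagonal _), hDD]
  have hvv : ∀ w : Fin n → ℂ, vecMulVec η (star η) *ᵥ w = (w ⬝ᵥ star η) • η := by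
    intro w; funext i
    simp only [mulVec, vecMulVec_apply, dotProduct, Pi.smul_apply, Pi.star_apply, smul_eq_mul]
    rw [Finset.sum_mul]
    exact Finset.sum_congr rfl fun j _ => by ring
  have hX2 : ∀ w : Fin n → ℂ, X₁ *ᵥ (X₁ *ᵥ w) = w + (w ⬝ᵥ star η) • η := by
    intro w
    rw [mulVec_mulVec, hsq, add_mulVec, one_mulVec, hvv]
  have hadj : ∀ u v : Fin n → ℂ, (X₁ *ᵥ u) ⬝ᵥ star v = u ⬝ᵥ star (X₁ *ᵥ v) := by
    intro u v
    calc (X₁ *ᵥ u) ⬝ᵥ star v = star v ⬝ᵥ (X₁ *ᵥ u) := dotProduct_comm _ _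
      _ = (star v ᵥ* X₁) ⬝ᵥ u := dotProduct_mulVec _ _ _
      _ = star (X₁ *ᵥ v) ⬝ᵥ u := by rw [star_mulVec, hherm]
      _ = u ⬝ᵥ star (X₁ *ᵥ v) := dotProduct_comm _ _
  -- η is an eigenvector of X₁ with eigenvalue x₀
  have hXη : X₁ *ᵥ η = (x₀:ℂ) • η := by
    set v := X₁ *ᵥ η - (x₀:ℂ) • η with hv
    have hv0 : X₁ *ᵥ v + (x₀:ℂ) • v = 0 := by
      rw [hv, mulVec_sub, mulVec_smul, hX2, hηdot]
      module
    have h1 : (0:ℂ) ≤ star v ⬝ᵥ (X₁ *ᵥ v) := by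
      exact hPsd.dotProduct_mulVec_nonneg v
    have h2 : (0:ℂ) ≤ star v ⬝ᵥ v := dotProduct_star_self_nonneg v
    have h3 : star v ⬝ᵥ (X₁ *ᵥ v) + (x₀:ℂ) * (star v ⬝ᵥ v) = 0 := by
      have h := congrArg (fun w => star v ⬝ᵥ w) hv0
      simpa [dotProduct_add, dotProduct_smul, smul_eq_mul] using h
    have h4 : star v ⬝ᵥ v = 0 := by
      have hb : (x₀:ℂ) * (star v ⬝ᵥ v) = 0 :=
        ((add_eq_zero_iff_of_nonneg h1 (mul_nonneg (by exact_mod_cast hx0pos.le) h2)).1 h3).2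
      rcases mul_eq_zero.1 hb with h | h
      · exact absurd h (by exact_mod_cast hx0pos.ne')
      · exact h
    have hveq : v = 0 := dotProduct_star_self_eq_zero.1 h4
    rw [hv, sub_eq_zero] at hveq
    exact hveq
  have e2 : ∀ l : Fin n → ℂ, (X₁ *ᵥ l) ⬝ᵥ star η = (x₀:ℂ) * (l ⬝ᵥ star η) := by
    intro l
    rw [hadj, hXη, star_smul, dotProduct_smul]
    simp [Complex.star_def, Complex.conj_ofReal, smul_eq_mul]
  have e3 : ∀ l : Fin n → ℂ, η ⬝ᵥ star (X₁ *ᵥ l) = (x₀:ℂ) * star (l ⬝ᵥ star η) := by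
    intro l
    rw [← hadj, hXη, smul_dotProduct, smul_eq_mul, hconj η l]
  have key : ∀ (ε : ℂ) (l : Fin n → ℂ), ε * ε = 1 → star ε = ε →
      (X₁ *ᵥ l + ε • η) ⬝ᵥ star (X₁ *ᵥ l + ε • η)
        = l ⬝ᵥ star l - 1
          + ((x₀:ℂ) + ε * (l ⬝ᵥ star η)) * ((x₀:ℂ) + ε * star (l ⬝ᵥ star η)) := by
    intro ε l hε1 hεs
    have e1 : (X₁ *ᵥ l) ⬝ᵥ star (X₁ *ᵥ l)
        = l ⬝ᵥ star l + star (l ⬝ᵥ star η) * (l ⬝ᵥ star η) := by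
      rw [hadj, hX2]
      simp [star_add, star_smul, dotProduct_add, dotProduct_smul, smul_eq_mul, mul_comm]
    simp only [add_dotProduct, dotProduct_add, star_add, star_smul, smul_dotProduct,
      dotProduct_smul, smul_eq_mul, hεs, e1, e2, e3, hηdot]
    linear_combination ((x₀:ℂ) ^ 2 - (l ⬝ᵥ star η) * star (l ⬝ᵥ star η) - 1) * hε1
  have hstard : ∀ (ε : ℂ) (l : Fin n → ℂ), star ε = ε →
      star ((x₀:ℂ) + ε * (l ⬝ᵥ star η)) = (x₀:ℂ) + ε * star (l ⬝ᵥ star η) := by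
    intro ε l hεs
    simp [star_add, star_mul', hεs, Complex.star_def, Complex.conj_ofReal]
  have hden : ∀ (ε : ℂ) (l : Fin n → ℂ), ε * ε = 1 → star ε = ε →
      ∑ i, ‖l i‖ ^ 2 < 1 → (x₀:ℂ) + ε * (l ⬝ᵥ star η) ≠ 0 := by
    intro ε l hε1 hεs hl hd0
    have hsd : (x₀:ℂ) + ε * star (l ⬝ᵥ star η) = 0 := by
      rw [← hstard ε l hεs, hd0, star_zero]
    have hk := key ε l hε1 hεs
    rw [hd0, hsd, zero_mul, add_zero, hdsum, hdsum] at hk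
    have hnn : (0:ℝ) ≤ ∑ i, ‖(X₁ *ᵥ l + ε • η) i‖ ^ 2 :=
      Finset.sum_nonneg fun i _ => sq_nonneg _
    have hre : (∑ i, ‖(X₁ *ᵥ l + ε • η) i‖ ^ 2 : ℝ) = (∑ i, ‖l i‖ ^ 2) - 1 := by
      exact_mod_cast hk
    linarith
  have mapball : ∀ (ε : ℂ) (l : Fin n → ℂ), ε * ε = 1 → star ε = ε → ∑ i, ‖l i‖ ^ 2 < 1 →
      ∑ i, ‖(((x₀:ℂ) + ε * (l ⬝ᵥ star η))⁻¹ • (X₁ *ᵥ l + ε • η)) i‖ ^ 2 < 1 := by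
    intro ε l hε1 hεs hl
    set d := (x₀:ℂ) + ε * (l ⬝ᵥ star η) with hd
    have hdne : d ≠ 0 := hden ε l hε1 hεs hl
    have hsdne : star d ≠ 0 := star_ne_zero.2 hdne
    have hN : 0 < Complex.normSq d := Complex.normSq_pos.2 hdne
    have hdd : d * star d = ((Complex.normSq d : ℝ) : ℂ) := by
      rw [Complex.star_def, Complex.mul_conj]
    have hkey2 : (d⁻¹ • (X₁ *ᵥ l + ε • η)) ⬝ᵥ star (d⁻¹ • (X₁ *ᵥ l + ε • η))
        = (((∑ i, ‖l i‖ ^ 2 : ℝ) : ℂ) - 1) / (d * star d) + 1 := by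
      rw [smul_dotProduct, star_smul, dotProduct_smul, smul_eq_mul, smul_eq_mul,
        key ε l hε1 hεs, hdsum l, ← hstard ε l hεs, ← hd, star_inv₀]
      rw [div_eq_mul_inv, mul_inv]
      linear_combination (star d * (star d)⁻¹) * mul_inv_cancel₀ hdne + mul_inv_cancel₀ hsdne
    have h6 : (∑ i, ‖(d⁻¹ • (X₁ *ᵥ l + ε • η)) i‖ ^ 2 : ℝ)
        = ((∑ i, ‖l i‖ ^ 2) - 1) / (Complex.normSq d) + 1 := by
      have h5 := (hdsum _).symm.trans hkey2
      rw [hdd] at h5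
      exact_mod_cast h5
    have h7 : ((∑ i, ‖l i‖ ^ 2) - 1) / (Complex.normSq d) < 0 :=
      div_neg_of_neg_of_pos (by linarith) hN
    rw [h6]
    linarith
  have hinv : ∀ (ε : ℂ) (l : Fin n → ℂ), ε * ε = 1 → star ε = ε →
      ((x₀:ℂ) + ε * (l ⬝ᵥ star η)) ≠ 0 →
      ((x₀:ℂ) + (-ε) * ((((x₀:ℂ) + ε * (l ⬝ᵥ star η))⁻¹ • (X₁ *ᵥ l + ε • η)) ⬝ᵥ star η))⁻¹
          • (X₁ *ᵥ (((x₀:ℂ) + ε * (l ⬝ᵥ star η))⁻¹ • (X₁ *ᵥ l + ε • η)) + (-ε) • η) = l := by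
    intro ε l hε1 hεs hdne
    set d := (x₀:ℂ) + ε * (l ⬝ᵥ star η) with hd
    have hμη : (d⁻¹ • (X₁ *ᵥ l + ε • η)) ⬝ᵥ star η
        = d⁻¹ * ((x₀:ℂ) * (l ⬝ᵥ star η) + ε * ((x₀:ℂ) ^ 2 - 1)) := by
      rw [smul_dotProduct, add_dotProduct, e2, smul_dotProduct, hηdot, smul_eq_mul, smul_eq_mul]
    have hd' : (x₀:ℂ) + (-ε) * ((d⁻¹ • (X₁ *ᵥ l + ε • η)) ⬝ᵥ star η) = d⁻¹ := by
      rw [hμη]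
      refine eq_inv_of_mul_eq_one_left ?_
      rw [hd]
      have hdne' : (x₀:ℂ) + ε * (l ⬝ᵥ star η) ≠ 0 := hd ▸ hdne
      field_simp
      linear_combination (1 - (x₀:ℂ) ^ 2) * hε1
    have hnum : X₁ *ᵥ (d⁻¹ • (X₁ *ᵥ l + ε • η)) + (-ε) • η = d⁻¹ • l := by
      rw [mulVec_smul, mulVec_add, hX2, mulVec_smul, hXη]
      funext i
      simp only [Pi.smul_apply, Pi.add_apply, smul_eq_mul, Pi.neg_apply]
      field_simp
      linear_combination (-(l ⬝ᵥ star η * η i)) * hε1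
    rw [hd', hnum, smul_smul, inv_inv, mul_inv_cancel₀ hdne, one_smul]
  constructor
  · intro l hl
    have h := hden 1 l (by norm_num) (by norm_num) hl
    rw [one_mul] at h
    exact h
  · have hmf : Set.MapsTo
        (fun l : Fin n → ℂ => ((x₀:ℂ) + ∑ i, l i * star (η i))⁻¹ • (X₁ *ᵥ l + η))
        {z : Fin n → ℂ | ∑ i, ‖z i‖ ^ 2 < 1} {z : Fin n → ℂ | ∑ i, ‖z i‖ ^ 2 < 1} := by
      intro l hl
      have h := mapball 1 l (by norm_num) (by norm_num) hl
      simp only [one_mul, one_smul] at h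
      exact h
    have hmg : Set.MapsTo
        (fun z : Fin n → ℂ => ((x₀:ℂ) + (-1:ℂ) * (z ⬝ᵥ star η))⁻¹ • (X₁ *ᵥ z + (-1:ℂ) • η))
        {z : Fin n → ℂ | ∑ i, ‖z i‖ ^ 2 < 1} {z : Fin n → ℂ | ∑ i, ‖z i‖ ^ 2 < 1} := by
      intro z hz
      exact mapball (-1) z (by norm_num) (by simp) hz
    refine Set.InvOn.bijOn ⟨?_, ?_⟩ hmf hmg
    · intro l hl
      have hdne := hden 1 l (by norm_num) (by norm_num) hl
      have h := hinv 1 l (by norm_num) (by norm_num) hdne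
      simp only [one_mul, one_smul] at h ⊢
      convert h using 4 <;> norm_num [dotProduct]
    · intro z hz
      have hdne := hden (-1) z (by norm_num) (by simp) hz
      have h := hinv (-1) z (by norm_num) (by simp) hdne
      simp only [neg_neg, one_mul, one_smul] at h
      exact h
end

section
/- Let n, m ≥ 1, let u be a unitary nm×nm complex matrix indexed by pairs (i,j) ∈ {1,…,n}×{1,…,m}, and let (z,w) ∈ Ω_u⁰ be a point of the core. Then: (a) for each i, the vector δᵢ⊗w ∈ ℂ^{nm} with (k,l) entry δ_{i,k}·w_l satisfies u(δᵢ⊗w) = δᵢ⊗w; (b) for each j, the vector z⊗δⱼ ∈ ℂ^{nm} with (k,l) entry z_k·δ_{l,j} satisfies u(z⊗δⱼ) = z⊗δⱼ; consequently the span of all these vectors is contained in Ker(u − I), and moreover Σ_k u_{(k,l),(i,j)}·conj(z_k) = δ_{j,l}·conj(z_i) for all i, j, l. -/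
open Matrix

/-- for a core point `(z,w)` of a unitary `u`, the vectors `δᵢ⊗w` and `z⊗δⱼ`
are fixed by `u`, their span lies in `Ker(u − I)`, and
`Σ_k u_(k,l),(i,j)·conj(z_k) = δ_{j,l}·conj(z_i)`. -/
theorem stmt_4 (n m : ℕ) (hn : 1 ≤ n) (hm : 1 ≤ m)
    (u : Matrix (Fin n × Fin m) (Fin n × Fin m) ℂ)
    (hu : u ∈ Matrix.unitaryGroup (Fin n × Fin m) ℂ)
    (z : Fin n → ℂ) (w : Fin m → ℂ)
    (hz : ∑ i, ‖z i‖ ^ 2 ≤ 1) (hw : ∑ j, ‖w j‖ ^ 2 ≤ 1)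
    (hcore : ∀ i j,
      (Matrix.of fun k l => u (i, j) (k, l) - if (k, l) = (i, j) then 1 else 0) *ᵥ w = 0 ∧
      (Matrix.of fun k l => u (i, j) (k, l) - if (k, l) = (i, j) then 1 else 0)ᵀ *ᵥ z = 0) :
    (∀ i : Fin n,
      u *ᵥ (fun p : Fin n × Fin m => if p.1 = i then w p.2 else 0)
        = fun p : Fin n × Fin m => if p.1 = i then w p.2 else 0) ∧
    (∀ j : Fin m,
      u *ᵥ (fun p : Fin n × Fin m => if p.2 = j then z p.1 else 0)
        = fun p : Fin n × Fin m => if p.2 = j then z p.1 else 0) ∧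
    Submodule.span ℂ
      ((Set.range fun i : Fin n =>
          (fun p : Fin n × Fin m => if p.1 = i then w p.2 else 0)) ∪
       (Set.range fun j : Fin m =>
          (fun p : Fin n × Fin m => if p.2 = j then z p.1 else 0)))
      ≤ LinearMap.ker (Matrix.mulVecLin (u - 1)) ∧
    (∀ (i : Fin n) (j l : Fin m),
      ∑ k, u (k, l) (i, j) * star (z k) = if j = l then star (z i) else 0) := by
  have ha : ∀ i : Fin n,
      u *ᵥ (fun p : Fin n × Fin m => if p.1 = i then w p.2 else 0)
        = fun p : Fin n × Fin m => if p.1 = i then w p.2 else 0 := by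
    intro i
    funext p
    obtain ⟨i', j'⟩ := p
    have h := congrFun (hcore i' j').1 i
    simp only [mulVec, dotProduct, of_apply, Pi.zero_apply, sub_mul, Finset.sum_sub_distrib,
      sub_eq_zero] at h
    show (∑ q : Fin n × Fin m, u (i', j') q * if q.1 = i then w q.2 else 0) = _
    rw [Fintype.sum_prod_type]
    simp only [mul_ite, mul_zero, Finset.sum_ite_eq', Finset.mem_univ, if_true]
    simp only [Finset.sum_ite_irrel, Finset.sum_const_zero, Finset.sum_ite_eq',
      Finset.mem_univ, if_true]
    rw [h]
    by_cases hi : i = i' <;> simp [Prod.ext_iff, hi, ite_and, eq_comm]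
  have hb : ∀ j : Fin m,
      u *ᵥ (fun p : Fin n × Fin m => if p.2 = j then z p.1 else 0)
        = fun p : Fin n × Fin m => if p.2 = j then z p.1 else 0 := by
    intro j
    funext p
    obtain ⟨i', j'⟩ := p
    have h := congrFun (hcore i' j').2 j
    simp only [mulVec, dotProduct, transpose_apply, of_apply, Pi.zero_apply, sub_mul,
      Finset.sum_sub_distrib, sub_eq_zero] at h
    show (∑ q : Fin n × Fin m, u (i', j') q * if q.2 = j then z q.1 else 0) = _
    rw [Fintype.sum_prod_type]
    simp only [mul_ite, mul_zero, Finset.sum_ite_eq', Finset.mem_univ, if_true]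
    rw [h]
    by_cases hj : j = j' <;> simp [Prod.ext_iff, hj, ite_and, eq_comm]
  refine ⟨ha, hb, ?_, ?_⟩
  · rw [Submodule.span_le]
    rintro v (⟨i, rfl⟩ | ⟨j, rfl⟩) <;>
      simp only [SetLike.mem_coe, LinearMap.mem_ker, mulVecLin_apply, sub_mulVec, one_mulVec,
        sub_eq_zero]
    · exact ha i
    · exact hb j
  · intro i j l
    have h2 : star u *ᵥ (fun p : Fin n × Fin m => if p.2 = l then z p.1 else 0)
        = fun p : Fin n × Fin m => if p.2 = l then z p.1 else 0 := by
      conv_lhs => rw [← hb l]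
      rw [mulVec_mulVec, (Matrix.mem_unitaryGroup_iff'.mp hu)]
      simp
    have h3 := congrArg star (congrFun h2 (i, j))
    simp only [mulVec, dotProduct, Fintype.sum_prod_type, Matrix.star_apply, star_sum,
      star_mul', star_star, mul_ite, mul_zero, Finset.sum_ite_eq', Finset.mem_univ,
      if_true] at h3
    rw [h3]
    split <;> simp
end

section
/- Let n, m ≥ 1 and let u be a unitary nm×nm complex matrix indexed by pairs (i,j) ∈ {1,…,n}×{1,…,m}. (i) If the core Ω_u⁰ contains a point (z,w) with z ≠ 0, then dim_ℂ Ker(u − I) ≥ m. (ii) If Ω_u⁰ contains a point (z,w) with w ≠ 0, then dim_ℂ Ker(u − I) ≥ n. (iii) If Ω_u⁰ contains a point (z,w) with z ≠ 0 and w ≠ 0, then dim_ℂ Ker(u − I) ≥ m + n − 1. -/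
open Matrix

/-- lower bounds on `dim Ker(u − I)` forced by nonzero core points. -/
theorem stmt_5 (n m : ℕ) (hn : 1 ≤ n) (hm : 1 ≤ m)
    (u : Matrix (Fin n × Fin m) (Fin n × Fin m) ℂ)
    (hu : u ∈ Matrix.unitaryGroup (Fin n × Fin m) ℂ)
    (z : Fin n → ℂ) (w : Fin m → ℂ)
    (hz : ∑ i, ‖z i‖ ^ 2 ≤ 1) (hw : ∑ j, ‖w j‖ ^ 2 ≤ 1)
    (hcore : ∀ i j,
      (Matrix.of fun k l => u (i, j) (k, l) - if (k, l) = (i, j) then 1 else 0) *ᵥ w = 0 ∧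
      (Matrix.of fun k l => u (i, j) (k, l) - if (k, l) = (i, j) then 1 else 0)ᵀ *ᵥ z = 0) :
    (z ≠ 0 → m ≤ Module.finrank ℂ (LinearMap.ker (Matrix.mulVecLin (u - 1)))) ∧
    (w ≠ 0 → n ≤ Module.finrank ℂ (LinearMap.ker (Matrix.mulVecLin (u - 1)))) ∧
    (z ≠ 0 → w ≠ 0 →
      m + n - 1 ≤ Module.finrank ℂ (LinearMap.ker (Matrix.mulVecLin (u - 1)))) := by
  classical
  set K := LinearMap.ker (Matrix.mulVecLin (u - 1)) with hKdef
  set X : Fin n → (Fin n × Fin m → ℂ) := fun i p => if p.1 = i then w p.2 else 0 with hXdef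
  set Y : Fin m → (Fin n × Fin m → ℂ) := fun j p => if p.2 = j then z p.1 else 0 with hYdef
  -- core conditions in scalar form
  have keyw : ∀ (a : Fin n) (b : Fin m) (i : Fin n),
      ∑ l, (u (a, b) (i, l) - if (a, b) = (i, l) then 1 else 0) * w l = 0 := by
    intro a b i
    have h := congrFun (hcore a b).1 i
    simp only [mulVec, dotProduct, of_apply, Pi.zero_apply] at h
    refine Eq.trans (Finset.sum_congr rfl fun l _ => ?_) h
    exact congrArg (fun t => (u (a, b) (i, l) - t) * w l) (if_congr eq_comm rfl rfl)
  have keyz : ∀ (a : Fin n) (b : Fin m) (j : Fin m),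
      ∑ k, (u (a, b) (k, j) - if (a, b) = (k, j) then 1 else 0) * z k = 0 := by
    intro a b j
    have h := congrFun (hcore a b).2 j
    simp only [mulVec, dotProduct, transpose_apply, of_apply, Pi.zero_apply] at h
    refine Eq.trans (Finset.sum_congr rfl fun k _ => ?_) h
    exact congrArg (fun t => (u (a, b) (k, j) - t) * z k) (if_congr eq_comm rfl rfl)
  have hXmem : ∀ i, X i ∈ K := by
    intro i
    rw [hKdef, LinearMap.mem_ker]
    funext p
    obtain ⟨a, b⟩ := p
    have h := keyw a b i
    simp only [mulVecLin_apply, mulVec, dotProduct, Matrix.sub_apply, one_apply, hXdef,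
      Fintype.sum_prod_type_right, mul_ite, mul_zero, Finset.sum_ite_eq', Finset.mem_univ,
      if_true, Pi.zero_apply]
    simpa using h
  have hYmem : ∀ j, Y j ∈ K := by
    intro j
    rw [hKdef, LinearMap.mem_ker]
    funext p
    obtain ⟨a, b⟩ := p
    have h := keyz a b j
    simp only [mulVecLin_apply, mulVec, dotProduct, Matrix.sub_apply, one_apply, hYdef,
      Fintype.sum_prod_type, mul_ite, mul_zero, Finset.sum_ite_eq', Finset.mem_univ,
      if_true, Pi.zero_apply]
    simpa using h
  constructor
  · intro hz0
    obtain ⟨i₀, hi₀⟩ := Function.ne_iff.mp hz0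
    replace hi₀ : z i₀ ≠ 0 := hi₀
    have hindep : LinearIndependent ℂ fun j => (⟨Y j, hYmem j⟩ : K) := by
      apply LinearIndependent.of_comp K.subtype
      rw [Fintype.linearIndependent_iff]
      intro g hg j
      have h := congrFun hg (i₀, j)
      simp only [Finset.sum_apply, Pi.smul_apply, smul_eq_mul, hYdef, Submodule.coe_subtype,
        Function.comp, Pi.zero_apply, mul_ite, mul_zero, Finset.sum_ite_eq, Finset.sum_ite_eq',
        Finset.mem_univ, if_true] at h
      exact (mul_eq_zero.mp h).resolve_right hi₀
    simpa using hindep.fintype_card_le_finrank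
  constructor
  · intro hw0
    obtain ⟨j₀, hj₀⟩ := Function.ne_iff.mp hw0
    replace hj₀ : w j₀ ≠ 0 := hj₀
    have hindep : LinearIndependent ℂ fun i => (⟨X i, hXmem i⟩ : K) := by
      apply LinearIndependent.of_comp K.subtype
      rw [Fintype.linearIndependent_iff]
      intro g hg i
      have h := congrFun hg (i, j₀)
      simp only [Finset.sum_apply, Pi.smul_apply, smul_eq_mul, hXdef, Submodule.coe_subtype,
        Function.comp, Pi.zero_apply, mul_ite, mul_zero, Finset.sum_ite_eq, Finset.sum_ite_eq',
        Finset.mem_univ, if_true] at h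
      exact (mul_eq_zero.mp h).resolve_right hj₀
    simpa using hindep.fintype_card_le_finrank
  · intro hz0 hw0
    obtain ⟨i₀, hi₀⟩ := Function.ne_iff.mp hz0
    replace hi₀ : z i₀ ≠ 0 := hi₀
    obtain ⟨j₀, hj₀⟩ := Function.ne_iff.mp hw0
    replace hj₀ : w j₀ ≠ 0 := hj₀
    have hindep : LinearIndependent ℂ
        (Sum.elim (fun i => (⟨X i, hXmem i⟩ : K))
          (fun j : {j : Fin m // j ≠ j₀} => (⟨Y j.1, hYmem j.1⟩ : K))) := by
      apply LinearIndependent.of_comp K.subtype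
      rw [Fintype.linearIndependent_iff]
      intro g hg
      have hgX : ∀ i, g (Sum.inl i) = 0 := by
        intro i
        have h := congrFun hg (i, j₀)
        simp only [Fintype.sum_sum_type, Finset.sum_apply, Pi.smul_apply, smul_eq_mul,
          Sum.elim_inl, Sum.elim_inr, Function.comp, Submodule.coe_subtype, hXdef, hYdef,
          Pi.add_apply, Pi.zero_apply, mul_ite, mul_zero, Finset.sum_ite_eq, Finset.sum_ite_eq',
          Finset.mem_univ, if_true] at h
        have h2 : ∑ x : {j : Fin m // j ≠ j₀},
            (if j₀ = (x : Fin m) then g (Sum.inr x) * z i else 0) = 0 :=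
          Finset.sum_eq_zero fun x _ => if_neg (fun hh => x.2 hh.symm)
        rw [h2, add_zero] at h
        exact (mul_eq_zero.mp h).resolve_right hj₀
      intro s
      match s with
      | Sum.inl i => exact hgX i
      | Sum.inr j =>
        have h := congrFun hg (i₀, j.1)
        simp only [Fintype.sum_sum_type, Finset.sum_apply, Pi.smul_apply, smul_eq_mul,
          Sum.elim_inl, Sum.elim_inr, Function.comp, Submodule.coe_subtype, hXdef, hYdef,
          Pi.add_apply, Pi.zero_apply, mul_ite, mul_zero, Finset.sum_ite_eq, Finset.sum_ite_eq',
          Finset.mem_univ, if_true, hgX, zero_mul, ite_self, Finset.sum_const_zero,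
          zero_add] at h
        have h2 : ∑ x : {j' : Fin m // j' ≠ j₀},
            (if (j : Fin m) = (x : Fin m) then g (Sum.inr x) * z i₀ else 0)
            = g (Sum.inr j) * z i₀ := by
          rw [Finset.sum_eq_single j]
          · rw [if_pos rfl]
          · intro j' _ hj'
            exact if_neg (fun hh => hj' (Subtype.ext hh).symm)
          · intro hmem; exact absurd (Finset.mem_univ j) hmem
        rw [h2] at h
        exact (mul_eq_zero.mp h).resolve_right hi₀
    have hcard := hindep.fintype_card_le_finrank
    have hcnt : Fintype.card (Fin n ⊕ {j : Fin m // j ≠ j₀}) = n + (m - 1) := by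
      simp only [Fintype.card_sum, Fintype.card_fin]
      congr 1
      simp [Fintype.card_subtype_compl]
    rw [hcnt] at hcard
    omega
end

section
/- Let n, m ≥ 1, let u be a unitary nm×nm complex matrix indexed by pairs (i,j) ∈ {1,…,n}×{1,…,m}, and let (z,w) ∈ Ω_u. Then (z,w) lies in the core Ω_u⁰ if and only if for every λ ∈ ℂⁿ and μ ∈ ℂᵐ, the 2×2 upper triangular matrices Zᵢ = [[zᵢ, λᵢ],[0, zᵢ]] (1 ≤ i ≤ n) and Wⱼ = [[wⱼ, μⱼ],[0, wⱼ]] (1 ≤ j ≤ m) satisfy the commutation relations Zᵢ·Wⱼ = Σ_{k,l} u_{(i,j),(k,l)}·Wₗ·Zₖ for all i, j. -/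
open Matrix

/-- a point `(z,w)` of `Ω_u` lies in the core iff for all `λ, μ` the
associated `2×2` upper triangular matrices satisfy the `u`-commutation relations. -/
theorem stmt_6 (n m : ℕ) (hn : 1 ≤ n) (hm : 1 ≤ m)
    (u : Matrix (Fin n × Fin m) (Fin n × Fin m) ℂ)
    (hu : u ∈ Matrix.unitaryGroup (Fin n × Fin m) ℂ)
    (z : Fin n → ℂ) (w : Fin m → ℂ)
    (hz : ∑ i, ‖z i‖ ^ 2 ≤ 1) (hw : ∑ j, ‖w j‖ ^ 2 ≤ 1)
    (hV : ∀ i j, z i * w j = ∑ k, ∑ l, u (i, j) (k, l) * z k * w l) :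
    (∀ i j,
      (Matrix.of fun k l => u (i, j) (k, l) - if (k, l) = (i, j) then 1 else 0) *ᵥ w = 0 ∧
      (Matrix.of fun k l => u (i, j) (k, l) - if (k, l) = (i, j) then 1 else 0)ᵀ *ᵥ z = 0)
    ↔
    (∀ (lam : Fin n → ℂ) (mu : Fin m → ℂ) (i : Fin n) (j : Fin m),
      (!![z i, lam i; 0, z i] : Matrix (Fin 2) (Fin 2) ℂ) * !![w j, mu j; 0, w j]
        = ∑ k, ∑ l, u (i, j) (k, l) •
            ((!![w l, mu l; 0, w l] : Matrix (Fin 2) (Fin 2) ℂ) *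
              !![z k, lam k; 0, z k])) := by

  constructor
  · intro h lam mu i j
    have h1 : ∀ k, ∑ l, u (i,j) (k,l) * w l = if k = i then w j else 0 := by
      intro k
      have := congrFun (h i j).1 k
      simp [Matrix.mulVec, dotProduct, sub_mul, Finset.sum_sub_distrib, Prod.ext_iff] at this
      rw [sub_eq_zero] at this
      rw [this]
      by_cases hk : k = i <;> simp [hk]
    have h2 : ∀ l, ∑ k, u (i,j) (k,l) * z k = if l = j then z i else 0 := by
      intro l
      have := congrFun (h i j).2 l
      simp [Matrix.mulVec, dotProduct, Matrix.transpose_apply, sub_mul,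
        Finset.sum_sub_distrib, Prod.ext_iff] at this
      rw [sub_eq_zero] at this
      rw [this]
      by_cases hl : l = j <;> simp [hl]
    ext a b
    fin_cases a <;> fin_cases b <;>
      simp [Matrix.mul_apply, Matrix.sum_apply, Fin.sum_univ_two, Fin.sum_univ_succ]
    · rw [hV i j]
      exact Finset.sum_congr rfl fun x _ => Finset.sum_congr rfl fun x1 _ => by ring
    · have key : (∑ x : Fin n, ∑ x1 : Fin m, u (i, j) (x, x1) * (w x1 * lam x + mu x1 * z x))
          = (∑ x : Fin n, lam x * (∑ x1, u (i,j) (x,x1) * w x1))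
            + (∑ x1 : Fin m, mu x1 * (∑ x, u (i,j) (x,x1) * z x)) := by
        simp only [mul_add, Finset.sum_add_distrib]
        congr 1
        · refine Finset.sum_congr rfl fun x _ => ?_
          rw [Finset.mul_sum]
          exact Finset.sum_congr rfl fun x1 _ => by ring
        · rw [Finset.sum_comm]
          refine Finset.sum_congr rfl fun x1 _ => ?_
          rw [Finset.mul_sum]
          exact Finset.sum_congr rfl fun x _ => by ring
      rw [key]
      simp only [h1, h2, mul_ite, mul_zero, Finset.sum_ite_eq', Finset.mem_univ, if_true]
      ring
    · rw [hV i j]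
      exact Finset.sum_congr rfl fun x _ => Finset.sum_congr rfl fun x1 _ => by ring
  · intro h i j
    constructor
    · funext k
      have hk := h (fun k' => if k' = k then 1 else 0) 0 i j
      have h01 := congrFun (congrFun hk 0) 1
      simp [Matrix.mul_apply, Matrix.sum_apply, Matrix.smul_apply, Fin.sum_univ_two,
        mul_ite, mul_zero, mul_one, Finset.sum_ite_eq', Prod.ext_iff] at h01
      simp only [Matrix.mulVec, dotProduct, Matrix.of_apply, sub_mul,
        Finset.sum_sub_distrib, Pi.zero_apply]
      rw [sub_eq_zero, ← h01]
      rcases eq_or_ne k i with hik | hik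
      · subst hik; simp [Prod.ext_iff]
      · simp [hik, hik.symm, Prod.ext_iff]
    · funext l
      have hl := h 0 (fun l' => if l' = l then 1 else 0) i j
      have h01 := congrFun (congrFun hl 0) 1
      simp [Matrix.mul_apply, Matrix.sum_apply, Matrix.smul_apply, Fin.sum_univ_two,
        mul_ite, mul_zero, mul_one, Finset.sum_ite_eq', Prod.ext_iff, ite_apply] at h01
      simp only [apply_ite Matrix.vecTail, apply_ite Matrix.vecHead, Matrix.vecHead,
        Matrix.vecTail, Function.comp_apply, Pi.zero_apply, Matrix.cons_val_zero,
        ite_apply, Fin.succ_zero_eq_one, Matrix.cons_val_one, Matrix.head_cons, mul_ite, mul_zero,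
        Finset.sum_ite_eq', Finset.mem_univ, if_true] at h01
      simp only [Matrix.mulVec, dotProduct, Matrix.of_apply, Matrix.transpose_apply,
        sub_mul, Finset.sum_sub_distrib, Pi.zero_apply]
      rw [sub_eq_zero, ← h01]
      rcases eq_or_ne l j with hjl | hjl
      · subst hjl; simp [Prod.ext_iff]
      · simp [hjl, hjl.symm, Prod.ext_iff]
end

section
/- Let n, m ≥ 1, let u be a unitary nm×nm complex matrix indexed by pairs (i,j) ∈ {1,…,n}×{1,…,m}, and let (z,w) ∈ Ω_u⁰ be a core point with ‖z‖ < 1. Set x₀ = (1−‖z‖²)^{−1/2}, β = (x₀+1)^{−1}, and let X₁ be the n×n matrix X₁ = Iₙ + β·x₀²·M, where M is the n×n matrix with (t,i) entry conj(z_t)·z_i. Then for all i, t ∈ {1,…,n} and j, l ∈ {1,…,m}: Σ_s (X₁)_{s,i}·u_{(s,j),(t,l)} = Σ_k u_{(i,j),(k,l)}·(X₁)_{t,k}. -/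
open Matrix

/-- intertwining identity for `X₁ = I + β·x₀²·M` at a core point
`(z,w)` with `‖z‖ < 1`:  `Σ_s (X₁)_{s,i}·u_{(s,j),(t,l)} = Σ_k u_{(i,j),(k,l)}·(X₁)_{t,k}`. -/
theorem stmt_8 (n m : ℕ) (hn : 1 ≤ n) (hm : 1 ≤ m)
    (u : Matrix (Fin n × Fin m) (Fin n × Fin m) ℂ)
    (hu : u ∈ Matrix.unitaryGroup (Fin n × Fin m) ℂ)
    (z : Fin n → ℂ) (w : Fin m → ℂ)
    (hz : ∑ i, ‖z i‖ ^ 2 < 1) (hw : ∑ j, ‖w j‖ ^ 2 ≤ 1)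
    (hcore : ∀ i j,
      (Matrix.of fun k l => u (i, j) (k, l) - if (k, l) = (i, j) then 1 else 0) *ᵥ w = 0 ∧
      (Matrix.of fun k l => u (i, j) (k, l) - if (k, l) = (i, j) then 1 else 0)ᵀ *ᵥ z = 0)
    (x₀ β : ℝ)
    (hx₀ : x₀ = (Real.sqrt (1 - ∑ i, ‖z i‖ ^ 2))⁻¹)
    (hβ : β = (x₀ + 1)⁻¹)
    (X₁ : Matrix (Fin n) (Fin n) ℂ)
    (hX₁ : X₁ = 1 + ((β * x₀ ^ 2 : ℝ) : ℂ) •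
      Matrix.of (fun t i => star (z t) * z i)) :
    ∀ (i t : Fin n) (j l : Fin m),
      ∑ s, X₁ s i * u (s, j) (t, l) = ∑ k, u (i, j) (k, l) * X₁ t k := by
  -- fact A
  have hA : ∀ (i : Fin n) (j l : Fin m),
      ∑ k, u (i, j) (k, l) * z k = if l = j then z i else 0 := by
    intro i j l
    have h := congrFun (hcore i j).2 l
    simp only [Matrix.mulVec, dotProduct, Matrix.transpose_apply, Matrix.of_apply,
      Pi.zero_apply, sub_mul, Finset.sum_sub_distrib, sub_eq_zero] at h
    rw [h]
    by_cases hjl : l = j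
    · subst hjl; simp [Prod.ext_iff, Finset.sum_ite_eq]
    · simp [Prod.ext_iff, hjl]
  set v : Fin m → (Fin n × Fin m → ℂ) := fun j p => if p.2 = j then z p.1 else 0 with hv
  have huv : ∀ j, u *ᵥ v j = v j := by
    intro j
    funext p
    obtain ⟨i, j'⟩ := p
    simp only [Matrix.mulVec, dotProduct, hv]
    rw [Fintype.sum_prod_type]
    simp only [mul_ite, mul_zero, Finset.sum_ite_eq', Finset.mem_univ, if_true]
    rw [hA i j' j]
    by_cases h : j = j' <;> simp [h, Ne.symm]
  have hB : ∀ (t : Fin n) (j l : Fin m),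
      ∑ s, star (z s) * u (s, j) (t, l) = if l = j then star (z t) else 0 := by
    intro t j l
    have h1 : star u *ᵥ v j = v j := by
      conv_lhs => rw [← huv j, Matrix.mulVec_mulVec, hu.1, Matrix.one_mulVec]
    have h2 := congrFun h1 (t, l)
    simp only [Matrix.mulVec, dotProduct, Matrix.star_apply, hv] at h2
    rw [Fintype.sum_prod_type] at h2
    simp only [mul_ite, mul_zero, Finset.sum_ite_eq', Finset.mem_univ, if_true] at h2
    calc ∑ s, star (z s) * u (s, j) (t, l)
        = star (∑ x, star (u (x, j) (t, l)) * z x) := by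
          simp only [star_sum, star_mul', star_star]
          exact Finset.sum_congr rfl fun s _ => (mul_comm _ _)
      _ = _ := by rw [h2]; split <;> simp
  intro i t j l
  have expand : ∀ s i : Fin n, X₁ s i
      = (if s = i then 1 else 0) + ((β * x₀ ^ 2 : ℝ) : ℂ) * (star (z s) * z i) := by
    intro s i'
    simp [hX₁, Matrix.one_apply]
  simp only [expand, add_mul, mul_add, Finset.sum_add_distrib, ite_mul, mul_ite,
    one_mul, zero_mul, mul_zero, mul_one, Finset.sum_ite_eq', Finset.sum_ite_eq,
    Finset.mem_univ, if_true]
  congr 1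
  rw [show (∑ s, ((β * x₀ ^ 2 : ℝ) : ℂ) * (star (z s) * z i) * u (s, j) (t, l))
      = ((β * x₀ ^ 2 : ℝ) : ℂ) * z i * ∑ s, star (z s) * u (s, j) (t, l) by
    rw [Finset.mul_sum]; congr 1; funext s; ring]
  rw [show (∑ k, u (i, j) (k, l) * (((β * x₀ ^ 2 : ℝ) : ℂ) * (star (z t) * z k)))
      = ((β * x₀ ^ 2 : ℝ) : ℂ) * star (z t) * ∑ k, u (i, j) (k, l) * z k by
    rw [Finset.mul_sum]; congr 1; funext k; ring]
  rw [hB t j l, hA i j l]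
  by_cases h : l = j <;> simp [h] <;> ring
end

section
/- Let u and v be 4×4 unitary complex matrices, indexed by pairs (i,j) ∈ {1,2}×{1,2}, each with dim_ℂ Ker(u − I) = 3 and dim_ℂ Ker(v − I) = 3. Suppose x and y are unit vectors in ℂ⁴ with u·x = λ·x and v·y = μ·y, where λ ≠ 1 and μ ≠ 1 (necessarily |λ| = |μ| = 1). Then u and v are product unitary equivalent if and only if λ = μ and there exist 2×2 unitary matrices A, B with c(x) = A·c(y)·B. -/
open Matrix

set_option linter.unusedSectionVars false

namespace Stmt10Aux

variable {n : Type*} [Fintype n] [DecidableEq n]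

lemma ext_of_mulVec {w w' : Matrix n n ℂ} (h : ∀ z, w *ᵥ z = w' *ᵥ z) : w = w' := by
  ext i j; have := congrFun (h (Pi.single j 1)) i; simpa using this

lemma vecMulVec_mulVec (a b z : n → ℂ) : vecMulVec a b *ᵥ z = (b ⬝ᵥ z) • a := by
  ext i
  simp only [mulVec, dotProduct, vecMulVec, of_apply, Pi.smul_apply, smul_eq_mul,
    Finset.sum_mul]
  exact Finset.sum_congr rfl fun j _ => by ring

lemma unitary_dot {M : Matrix n n ℂ} (hM : M ∈ Matrix.unitaryGroup n ℂ) (a b : n → ℂ) :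
    star (M *ᵥ a) ⬝ᵥ (M *ᵥ b) = star a ⬝ᵥ b := by
  have h1 : Mᴴ * M = 1 := by
    simpa [star_eq_conjTranspose] using (Matrix.mem_unitaryGroup_iff'.mp hM)
  rw [star_mulVec, dotProduct_mulVec, vecMul_vecMul, h1, vecMul_one]

lemma dot_self_of_norm (x : n → ℂ) (hx : ∑ p, ‖x p‖ ^ 2 = 1) : star x ⬝ᵥ x = 1 := by
  have : star x ⬝ᵥ x = ((∑ p, ‖x p‖ ^ 2 : ℝ) : ℂ) := by
    push_cast
    refine Finset.sum_congr rfl fun p _ => ?_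
    simpa using RCLike.conj_mul (x p)
  rw [this, hx]
  norm_num

lemma mul_vecMulVec_mul (M N : Matrix n n ℂ) (a b : n → ℂ) :
    M * vecMulVec a b * N = vecMulVec (M *ᵥ a) (b ᵥ* N) := by
  ext i j
  simp only [mul_apply, vecMulVec, of_apply, mulVec, vecMul, dotProduct,
    Finset.sum_mul, Finset.mul_sum]
  exact Finset.sum_congr rfl fun k _ => Finset.sum_congr rfl fun l _ => by ring

lemma trace_vecMulVec_star (a : n → ℂ) : trace (vecMulVec a (star a)) = star a ⬝ᵥ a := by
  simp only [trace, diag_apply, vecMulVec, of_apply, dotProduct, Pi.star_apply]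
  exact Finset.sum_congr rfl fun p _ => mul_comm _ _

lemma key (w : Matrix (Fin 2 × Fin 2) (Fin 2 × Fin 2) ℂ)
    (hw : w ∈ Matrix.unitaryGroup (Fin 2 × Fin 2) ℂ)
    (hk : Module.finrank ℂ (LinearMap.ker (Matrix.mulVecLin (w - 1))) = 3)
    (x : Fin 2 × Fin 2 → ℂ) (hx : star x ⬝ᵥ x = 1)
    (lam : ℂ) (hlam : lam ≠ 1) (hux : w *ᵥ x = lam • x) :
    w = 1 + (lam - 1) • vecMulVec x (star x) := by
  have hx0 : x ≠ 0 := by rintro rfl; simp at hx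
  have hwHw : wᴴ * w = 1 := by
    simpa [star_eq_conjTranspose] using (Matrix.mem_unitaryGroup_iff'.mp hw)
  have hlam1 : (starRingEnd ℂ) lam * lam = 1 := by
    have h := unitary_dot hw x x
    rw [hux, star_smul, smul_dotProduct, dotProduct_smul, hx] at h
    simpa [mul_assoc] using h
  have hlam0 : lam ≠ 0 := by rintro rfl; simp at hlam1
  have hconj : (starRingEnd ℂ) lam = lam⁻¹ := eq_inv_of_mul_eq_one_left hlam1
  have hwHx : wᴴ *ᵥ x = lam⁻¹ • x := by
    have h2 : wᴴ *ᵥ (w *ᵥ x) = x := by rw [mulVec_mulVec, hwHw, one_mulVec]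
    rw [hux, mulVec_smul] at h2
    calc wᴴ *ᵥ x = lam⁻¹ • (lam • (wᴴ *ᵥ x)) := by
          rw [smul_smul, inv_mul_cancel₀ hlam0, one_smul]
      _ = lam⁻¹ • x := by rw [h2]
  have hfun : ∀ z, star x ⬝ᵥ (w *ᵥ z) = lam * (star x ⬝ᵥ z) := by
    intro z
    have h1 : star x ᵥ* w = star (wᴴ *ᵥ x) := by
      rw [star_mulVec, conjTranspose_conjTranspose]
    have h4 : star lam = lam⁻¹ := hconj
    have h3 : star (lam⁻¹ : ℂ) = lam := by rw [star_inv₀, h4, inv_inv]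
    rw [dotProduct_mulVec, h1, hwHx, star_smul, smul_dotProduct, h3, smul_eq_mul]
  set T := Matrix.mulVecLin (w - 1) with hT
  have hTapp : ∀ z, T z = w *ᵥ z - z := by
    intro z; simp [hT, sub_mulVec, one_mulVec]
  have hTx : T x = (lam - 1) • x := by
    rw [hTapp, hux, sub_smul, one_smul]
  have hlam1' : lam - 1 ≠ 0 := sub_ne_zero.mpr hlam
  have hx_mem : x ∈ LinearMap.range T := by
    refine ⟨(lam - 1)⁻¹ • x, ?_⟩
    rw [_root_.map_smul, hTx, smul_smul, inv_mul_cancel₀ hlam1', one_smul]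
  have hspan_le : Submodule.span ℂ {x} ≤ LinearMap.range T := by
    rw [Submodule.span_le, Set.singleton_subset_iff]; exact hx_mem
  have hrank : Module.finrank ℂ (LinearMap.range T) = 1 := by
    have h4 : Module.finrank ℂ (Fin 2 × Fin 2 → ℂ) = 4 := by
      rw [Module.finrank_fintype_fun_eq_card]; simp
    have h5 := LinearMap.finrank_range_add_finrank_ker T
    rw [hk, h4] at h5
    omega
  have hrange : LinearMap.range T = Submodule.span ℂ {x} :=
    (Submodule.eq_of_le_of_finrank_eq hspan_le
      (by rw [finrank_span_singleton hx0, hrank])).symm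
  apply ext_of_mulVec
  intro z
  obtain ⟨c, hc⟩ := Submodule.mem_span_singleton.mp
    (hrange ▸ LinearMap.mem_range_self T z)
  have hcval : c = (lam - 1) * (star x ⬝ᵥ z) := by
    have h6 : star x ⬝ᵥ (T z) = c := by
      rw [← hc, dotProduct_smul, hx, smul_eq_mul, mul_one]
    rw [← h6, hTapp, dotProduct_sub, hfun z]
    ring
  have h7 : w *ᵥ z = z + ((lam - 1) * (star x ⬝ᵥ z)) • x := by
    have h8 := hc.trans (hTapp z)
    rw [hcval] at h8
    rw [eq_sub_iff_add_eq] at h8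
    rw [← h8, add_comm]
  rw [h7, add_mulVec, one_mulVec, smul_mulVec, vecMulVec_mulVec, smul_smul]

lemma kron_conjTranspose (A B : Matrix (Fin 2) (Fin 2) ℂ) :
    (kroneckerMap (· * ·) A B)ᴴ = kroneckerMap (· * ·) Aᴴ Bᴴ := by
  ext i j
  simp [conjTranspose_apply, kroneckerMap_apply, mul_comm]

lemma kron_unitary {A B : Matrix (Fin 2) (Fin 2) ℂ}
    (hA : A ∈ Matrix.unitaryGroup (Fin 2) ℂ) (hB : B ∈ Matrix.unitaryGroup (Fin 2) ℂ) :
    kroneckerMap (· * ·) A B ∈ Matrix.unitaryGroup (Fin 2 × Fin 2) ℂ := by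
  rw [Matrix.mem_unitaryGroup_iff']
  rw [star_eq_conjTranspose, kron_conjTranspose]
  have h1 : Aᴴ * A = 1 := by
    simpa [star_eq_conjTranspose] using Matrix.mem_unitaryGroup_iff'.mp hA
  have h2 : Bᴴ * B = 1 := by
    simpa [star_eq_conjTranspose] using Matrix.mem_unitaryGroup_iff'.mp hB
  rw [← Matrix.mul_kronecker_mul, h1, h2, Matrix.one_kronecker_one]

lemma transpose_unitary {A : Matrix (Fin 2) (Fin 2) ℂ}
    (hA : A ∈ Matrix.unitaryGroup (Fin 2) ℂ) :
    Aᵀ ∈ Matrix.unitaryGroup (Fin 2) ℂ := by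
  rw [Matrix.mem_unitaryGroup_iff]
  have h1 : Aᴴ * A = 1 := by
    simpa [star_eq_conjTranspose] using Matrix.mem_unitaryGroup_iff'.mp hA
  have h2 : Aᵀᴴ = Aᴴᵀ := by ext i j; simp [conjTranspose_apply, transpose_apply]
  rw [star_eq_conjTranspose, h2, ← transpose_mul, h1, transpose_one]

lemma ct_unitary {A : Matrix (Fin 2) (Fin 2) ℂ}
    (hA : A ∈ Matrix.unitaryGroup (Fin 2) ℂ) :
    Aᴴ ∈ Matrix.unitaryGroup (Fin 2) ℂ := by
  rw [Matrix.mem_unitaryGroup_iff, star_eq_conjTranspose, conjTranspose_conjTranspose]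
  simpa [star_eq_conjTranspose] using Matrix.mem_unitaryGroup_iff'.mp hA

lemma smul_unitary {c : ℂ} {A : Matrix (Fin 2) (Fin 2) ℂ} (hc : star c * c = 1)
    (hA : A ∈ Matrix.unitaryGroup (Fin 2) ℂ) :
    c • A ∈ Matrix.unitaryGroup (Fin 2) ℂ := by
  rw [Matrix.mem_unitaryGroup_iff']
  have h1 : star A * A = 1 := Matrix.mem_unitaryGroup_iff'.mp hA
  rw [star_smul, Matrix.smul_mul, Matrix.mul_smul, h1, smul_smul, hc, one_smul]

lemma c_kron (A B : Matrix (Fin 2) (Fin 2) ℂ) (z : Fin 2 × Fin 2 → ℂ) :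
    (Matrix.of fun i j => (kroneckerMap (· * ·) A B *ᵥ z) (i, j))
      = A * (Matrix.of fun i j => z (i, j)) * Bᵀ := by
  ext i j
  simp only [of_apply, mulVec, dotProduct, kroneckerMap_apply, mul_apply,
    transpose_apply, Fintype.sum_prod_type, Finset.sum_mul, Finset.mul_sum]
  refine Finset.sum_comm.trans ?_
  exact Finset.sum_congr rfl fun k _ => Finset.sum_congr rfl fun l _ => by ring

lemma conj_expand {M : Matrix (Fin 2 × Fin 2) (Fin 2 × Fin 2) ℂ} (hMH : M * Mᴴ = 1)
    (s : ℂ) (a : Fin 2 × Fin 2 → ℂ) :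
    M * (1 + s • vecMulVec a (star a)) * Mᴴ
      = 1 + s • vecMulVec (M *ᵥ a) (star (M *ᵥ a)) := by
  rw [mul_add, mul_one, add_mul, hMH, Matrix.mul_smul, Matrix.smul_mul, mul_assoc,
    ← mul_assoc, mul_vecMulVec_mul, ← star_mulVec]

end Stmt10Aux

open Stmt10Aux in
/-- two 4×4 unitaries with 3-dimensional fixed space, with eigen-data
`(x,λ)` and `(y,μ)` (eigenvalues ≠ 1), are product unitary equivalent iff `λ = μ` and
`c(x) = A·c(y)·B` for some 2×2 unitaries `A, B`. -/
theorem stmt_10 (u v : Matrix (Fin 2 × Fin 2) (Fin 2 × Fin 2) ℂ)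
    (hu : u ∈ Matrix.unitaryGroup (Fin 2 × Fin 2) ℂ)
    (hv : v ∈ Matrix.unitaryGroup (Fin 2 × Fin 2) ℂ)
    (hku : Module.finrank ℂ (LinearMap.ker (Matrix.mulVecLin (u - 1))) = 3)
    (hkv : Module.finrank ℂ (LinearMap.ker (Matrix.mulVecLin (v - 1))) = 3)
    (x y : Fin 2 × Fin 2 → ℂ)
    (hx : ∑ p, ‖x p‖ ^ 2 = 1) (hy : ∑ p, ‖y p‖ ^ 2 = 1)
    (lam mu : ℂ) (hlam : lam ≠ 1) (hmu : mu ≠ 1)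
    (hux : u *ᵥ x = lam • x) (hvy : v *ᵥ y = mu • y) :
    (∃ A B : Matrix (Fin 2) (Fin 2) ℂ,
      A ∈ Matrix.unitaryGroup (Fin 2) ℂ ∧ B ∈ Matrix.unitaryGroup (Fin 2) ℂ ∧
      (Matrix.kroneckerMap (· * ·) A B) * u = v * (Matrix.kroneckerMap (· * ·) A B)) ↔
    (lam = mu ∧
      ∃ A B : Matrix (Fin 2) (Fin 2) ℂ,
        A ∈ Matrix.unitaryGroup (Fin 2) ℂ ∧ B ∈ Matrix.unitaryGroup (Fin 2) ℂ ∧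
        (Matrix.of fun i j => x (i, j)) = A * (Matrix.of fun i j => y (i, j)) * B) := by
  have hxd := dot_self_of_norm x hx
  have hyd := dot_self_of_norm y hy
  have hu' := key u hu hku x hxd lam hlam hux
  have hv' := key v hv hkv y hyd mu hmu hvy
  constructor
  · rintro ⟨A, B, hA, hB, hcomm⟩
    set M := kroneckerMap (· * ·) A B with hMdef
    have hM := kron_unitary hA hB
    have hMH : M * Mᴴ = 1 := by
      simpa [star_eq_conjTranspose] using Matrix.mem_unitaryGroup_iff.mp hM
    have hHM : Mᴴ * M = 1 := by
      simpa [star_eq_conjTranspose] using Matrix.mem_unitaryGroup_iff'.mp hM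
    have hveq : v = M * u * Mᴴ := by
      calc v = v * (M * Mᴴ) := by rw [hMH, mul_one]
        _ = (v * M) * Mᴴ := by rw [mul_assoc]
        _ = M * u * Mᴴ := by rw [← hcomm]
    set z := M *ᵥ x with hzdef
    have hzd : star z ⬝ᵥ z = 1 := by rw [hzdef, unitary_dot hM, hxd]
    have hv2 : v = 1 + (lam - 1) • vecMulVec z (star z) := by
      rw [hveq, hu', conj_expand hMH]
    have heq : (lam - 1) • vecMulVec z (star z) = (mu - 1) • vecMulVec y (star y) :=
      add_left_cancel (hv2.symm.trans hv')
    have hlm : lam = mu := by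
      have h9 := congrArg Matrix.trace heq
      rw [trace_smul, trace_smul, trace_vecMulVec_star, trace_vecMulVec_star, hzd, hyd] at h9
      simpa [sub_left_inj] using h9
    refine ⟨hlm, ?_⟩
    have hvmv : vecMulVec z (star z) = vecMulVec y (star y) := by
      rw [← hlm] at heq
      exact smul_right_injective _ (sub_ne_zero.mpr hlam) heq
    obtain ⟨j0, hy0⟩ : ∃ j, y j ≠ 0 := by
      by_contra h; push_neg at h
      rw [show y = 0 from funext h] at hyd; simp at hyd
    have hent : ∀ i j, z i * star (z j) = y i * star (y j) := by
      intro i j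
      have h10 := congrFun (congrFun hvmv i) j
      simpa [vecMulVec_apply, Pi.star_apply] using h10
    have hz0 : z j0 ≠ 0 := by
      intro h0
      apply hy0
      have h11 : y j0 * star (y j0) = 0 := by rw [← hent j0 j0, h0, zero_mul]
      rcases mul_eq_zero.mp h11 with h | h
      · exact h
      · exact star_eq_zero.mp h
    have hszo : star (z j0) ≠ 0 := star_ne_zero.mpr hz0
    set c : ℂ := star (y j0) / star (z j0) with hcdef
    have hcz : z = c • y := by
      funext i
      have h1 := hent i j0
      rw [Pi.smul_apply, smul_eq_mul, hcdef, div_mul_eq_mul_div, eq_div_iff hszo]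
      linear_combination h1
    have hcc : star c * c = 1 := by
      have h2 := hent j0 j0
      have h12 : star c * c = (y j0 * star (y j0)) / (z j0 * star (z j0)) := by
        rw [hcdef, star_div₀, star_star, star_star, div_mul_div_comm]
      rw [h12, ← h2, div_self (mul_ne_zero hz0 hszo)]
    have hxz : x = Mᴴ *ᵥ z := by rw [hzdef, mulVec_mulVec, hHM, one_mulVec]
    refine ⟨Aᴴ, c • Bᴴᵀ, ct_unitary hA, smul_unitary hcc (transpose_unitary (ct_unitary hB)), ?_⟩
    have h3 : (Matrix.of fun i j => x (i, j))
        = Matrix.of fun i j => ((kroneckerMap (· * ·) Aᴴ Bᴴ) *ᵥ (c • y)) (i, j) := by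
      rw [← kron_conjTranspose, ← hcz, ← hxz]
    rw [h3]
    have h4 : (kroneckerMap (· * ·) Aᴴ Bᴴ) *ᵥ (c • y)
        = c • ((kroneckerMap (· * ·) Aᴴ Bᴴ) *ᵥ y) := mulVec_smul _ _ _
    have h5 : (Matrix.of fun i j => ((kroneckerMap (· * ·) Aᴴ Bᴴ) *ᵥ (c • y)) (i, j))
        = c • Matrix.of fun i j => ((kroneckerMap (· * ·) Aᴴ Bᴴ) *ᵥ y) (i, j) := by
      ext i j; rw [h4]; simp
    rw [h5, c_kron, Matrix.mul_smul]
  · rintro ⟨hlm, A, B, hA, hB, hcxy⟩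
    rw [← hlm] at hv'
    set M := kroneckerMap (· * ·) A Bᵀ with hMdef
    have hM := kron_unitary hA (transpose_unitary hB)
    have hMH : M * Mᴴ = 1 := by
      simpa [star_eq_conjTranspose] using Matrix.mem_unitaryGroup_iff.mp hM
    have hHM : Mᴴ * M = 1 := by
      simpa [star_eq_conjTranspose] using Matrix.mem_unitaryGroup_iff'.mp hM
    have hxy : x = M *ᵥ y := by
      have h1 : (Matrix.of fun i j => x (i, j)) = Matrix.of fun i j => (M *ᵥ y) (i, j) := by
        rw [c_kron, transpose_transpose, ← hcxy]
      funext p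
      obtain ⟨i, j⟩ := p
      exact congrFun (congrFun h1 i) j
    have huv : u = M * v * Mᴴ := by
      rw [hu', hv', hxy, conj_expand hMH]
    refine ⟨Aᴴ, Bᵀᴴ, ct_unitary hA, ct_unitary (transpose_unitary hB), ?_⟩
    have h2 : kroneckerMap (· * ·) Aᴴ Bᵀᴴ = Mᴴ := (kron_conjTranspose A Bᵀ).symm
    rw [h2, huv]
    calc Mᴴ * (M * v * Mᴴ) = (Mᴴ * M) * v * Mᴴ := by rw [← mul_assoc, ← mul_assoc]
      _ = v * Mᴴ := by rw [hHM, one_mul]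
end

section
/- Let 0 ≤ a ≤ 1/√2 and let λ ∈ ℂ with |λ| = 1 and λ ≠ 1. Then the matrix u(a,λ) is unitary, dim_ℂ Ker(u(a,λ) − I) = 3, and the unit vector x = (a, 0, 0, (1−a²)^{1/2})ᵀ satisfies u(a,λ)·x = λ·x. -/
open Matrix

/-- The 4×4 matrix `u(a,λ)`, indexed by `{1,2}×{1,2}` in lexicographic order. -/
noncomputable def uMat (a : ℝ) (l : ℂ) :
    Matrix (Fin 2 × Fin 2) (Fin 2 × Fin 2) ℂ :=
  Matrix.of fun p q =>
    if p = (0, 0) ∧ q = (0, 0) then (l - 1) * (a : ℂ) ^ 2 + 1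
    else if p = (0, 0) ∧ q = (1, 1) then (l - 1) * (a : ℂ) * (Real.sqrt (1 - a ^ 2) : ℂ)
    else if p = (1, 1) ∧ q = (0, 0) then (l - 1) * (a : ℂ) * (Real.sqrt (1 - a ^ 2) : ℂ)
    else if p = (1, 1) ∧ q = (1, 1) then l + (1 - l) * (a : ℂ) ^ 2
    else if p = q then 1 else 0

/-- `u(a,λ)` is unitary, has `dim Ker(u(a,λ) − I) = 3`, and the unit
vector `x = (a,0,0,(1−a²)^{1/2})ᵗ` is an eigenvector for the eigenvalue `λ`. -/
theorem stmt_12 (a : ℝ) (ha0 : 0 ≤ a) (ha : a ≤ 1 / Real.sqrt 2)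
    (l : ℂ) (hl : ‖l‖ = 1) (hl1 : l ≠ 1)
    (x : Fin 2 × Fin 2 → ℂ)
    (hx : x = fun p => if p = (0, 0) then (a : ℂ)
      else if p = (1, 1) then (Real.sqrt (1 - a ^ 2) : ℂ) else 0) :
    uMat a l ∈ Matrix.unitaryGroup (Fin 2 × Fin 2) ℂ ∧
    Module.finrank ℂ (LinearMap.ker (Matrix.mulVecLin (uMat a l - 1))) = 3 ∧
    (∑ p, ‖x p‖ ^ 2 = 1) ∧
    uMat a l *ᵥ x = l • x := by
  -- basic real facts
  have hs2 : (0:ℝ) < Real.sqrt 2 := Real.sqrt_pos.mpr (by norm_num)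
  have ha2 : a ^ 2 ≤ 1 / 2 := by
    have := pow_le_pow_left₀ ha0 ha 2
    rwa [div_pow, one_pow, Real.sq_sqrt (by norm_num : (2:ℝ) ≥ 0)] at this
  have h1a : (0:ℝ) ≤ 1 - a ^ 2 := by linarith
  have hb0 : 0 ≤ Real.sqrt (1 - a ^ 2) := Real.sqrt_nonneg _
  have hbR : Real.sqrt (1 - a ^ 2) ^ 2 = 1 - a ^ 2 := Real.sq_sqrt h1a
  have hb2 : ((Real.sqrt (1 - a ^ 2) : ℝ) : ℂ) ^ 2 = 1 - (a : ℂ) ^ 2 := by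
    rw [← Complex.ofReal_pow, hbR]; push_cast; ring
  have hll : (starRingEnd ℂ) l * l = 1 := by
    have hn : Complex.normSq l = 1 := by
      rw [Complex.normSq_eq_norm_sq, hl]; norm_num
    calc (starRingEnd ℂ) l * l = l * (starRingEnd ℂ) l := by ring
    _ = (Complex.normSq l : ℂ) := Complex.mul_conj l
    _ = 1 := by rw [hn]; norm_num
  -- the vector v and projection P
  set v : Fin 2 × Fin 2 → ℂ := fun p =>
    if p = (0, 0) then (a : ℂ)
    else if p = (1, 1) then ((Real.sqrt (1 - a ^ 2) : ℝ) : ℂ) else 0 with hvdef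
  have hxv : x = v := hx
  have hvv : ∑ k, v k * v k = 1 := by
    rw [Fintype.sum_prod_type]
    simp [hvdef, Fin.sum_univ_two, Prod.ext_iff]
    linear_combination hb2
  set P : Matrix (Fin 2 × Fin 2) (Fin 2 × Fin 2) ℂ := vecMulVec v v with hPdef
  have hPmul : ∀ y : Fin 2 × Fin 2 → ℂ, P *ᵥ y = (∑ k, v k * y k) • v := by
    intro y
    funext p
    simp only [mulVec, dotProduct, hPdef, vecMulVec_apply, Pi.smul_apply, smul_eq_mul]
    rw [Finset.sum_mul]
    exact Finset.sum_congr rfl fun k _ => by ring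
  have hPP : P * P = P := by
    ext p q
    simp only [Matrix.mul_apply, hPdef, vecMulVec_apply]
    have : ∀ k, v p * v k * (v k * v q) = (v k * v k) * (v p * v q) := fun k => by ring
    rw [Finset.sum_congr rfl fun k _ => this k, ← Finset.sum_mul, hvv, one_mul]
  have hstarv : ∀ p, (starRingEnd ℂ) (v p) = v p := by
    intro p
    simp only [hvdef]
    split <;> [skip; split] <;> simp
  have hstarP : star P = P := by
    ext p q
    simp only [star_apply, hPdef, vecMulVec_apply, star_mul', hstarv]
    change (starRingEnd ℂ) (v q) * (starRingEnd ℂ) (v p) = _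
    rw [hstarv, hstarv]; ring
  -- decomposition u = 1 + (l-1) • P
  have hU : uMat a l = 1 + (l - 1) • P := by
    ext p q
    obtain ⟨i, j⟩ := p
    obtain ⟨k, m⟩ := q
    fin_cases i <;> fin_cases j <;> fin_cases k <;> fin_cases m <;>
      simp [uMat, hPdef, vecMulVec_apply, hvdef, Matrix.one_apply, Prod.ext_iff] <;>
      first
        | ring1
        | linear_combination (l - 1) * hb2
        | linear_combination (1 - l) * hb2
  refine ⟨?_, ?_, ?_, ?_⟩
  · -- unitary
    rw [Matrix.mem_unitaryGroup_iff, hU]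
    have hstar : star (1 + (l - 1) • P) = 1 + ((starRingEnd ℂ) l - 1) • P := by
      rw [star_add, star_one, star_smul, hstarP]
      congr 1
      simp [star_sub]
    rw [hstar]
    have key : ∀ c d : ℂ, ((1 : Matrix (Fin 2 × Fin 2) (Fin 2 × Fin 2) ℂ) + c • P) *
        (1 + d • P) = 1 + (c + d + c * d) • P := by
      intro c d
      rw [mul_add, mul_one, add_mul, one_mul, smul_mul_smul_comm, hPP, add_smul, add_smul]
      abel
    rw [key]
    have hc0 : l - 1 + ((starRingEnd ℂ) l - 1) + (l - 1) * ((starRingEnd ℂ) l - 1) = 0 := by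
      linear_combination hll
    rw [hc0, zero_smul, add_zero]
  · -- kernel dimension
    set f : (Fin 2 × Fin 2 → ℂ) →ₗ[ℂ] ℂ :=
      { toFun := fun y => ∑ k, v k * y k
        map_add' := by intro y z; simp [mul_add, Finset.sum_add_distrib]
        map_smul' := by intro c y; simp [Finset.mul_sum, mul_left_comm] } with hfdef
    have hfapp : ∀ y, f y = ∑ k, v k * y k := fun y => rfl
    have hker : LinearMap.ker (Matrix.mulVecLin (uMat a l - 1)) = LinearMap.ker f := by
      ext y
      simp only [LinearMap.mem_ker, Matrix.mulVecLin_apply, hfapp]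
      have hM : uMat a l - 1 = (l - 1) • P := by rw [hU]; abel
      rw [hM, Matrix.smul_mulVec, hPmul]
      constructor
      · intro h
        have hl0 : l - 1 ≠ 0 := sub_ne_zero.mpr hl1
        rcases smul_eq_zero.mp h with h' | h2
        · exact absurd h' hl0
        rcases smul_eq_zero.mp h2 with hc | hv0
        · exact hc
        · exfalso
          rw [hv0] at hvv
          simp at hvv
      · intro h; rw [h, zero_smul, smul_zero]
    rw [hker]
    have hfv : f v = 1 := by rw [hfapp]; exact hvv
    have hrange : LinearMap.range f = ⊤ := by
      rw [LinearMap.range_eq_top]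
      intro c
      exact ⟨c • v, by rw [LinearMap.map_smul, hfv, smul_eq_mul, mul_one]⟩
    have := LinearMap.finrank_range_add_finrank_ker f
    rw [hrange] at this
    simp only [finrank_top] at this
    have hdom : Module.finrank ℂ (Fin 2 × Fin 2 → ℂ) = 4 := by
      simp [Module.finrank_fintype_fun_eq_card]
    rw [hdom] at this
    have h1 : Module.finrank ℂ ℂ = 1 := Module.finrank_self ℂ
    omega
  · -- norm
    rw [hxv, Fintype.sum_prod_type]
    simp [hvdef, Fin.sum_univ_two, Prod.ext_iff, Complex.norm_real,
      abs_of_nonneg ha0, abs_of_nonneg hb0]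
    linarith [hbR]
  · -- eigenvector
    rw [hxv, hU]
    rw [Matrix.add_mulVec, Matrix.one_mulVec, Matrix.smul_mulVec, hPmul, hvv]
    funext p
    simp only [Pi.add_apply, Pi.smul_apply, smul_eq_mul, one_smul]
    ring
end

section
/- Let λ ∈ ℂ with |λ| = 1 and λ ≠ 1, and let u = u(0,λ) (so u is the diagonal matrix diag(1,1,1,λ)). Then Ω_u = {(z,w) ∈ ℂ²×ℂ² : ‖z‖ ≤ 1, ‖w‖ ≤ 1, z₂·w₂ = 0} and the core is Ω_u⁰ = {(z,w) : z₂ = 0, w₂ = 0, |z₁| ≤ 1, |w₁| ≤ 1}. -/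
open Matrix

/-- for `u = u(0,λ)`, the character space `Ω_u` consists of the pairs
`(z,w)` in the product of closed unit balls with `z₂·w₂ = 0`, and the core consists of
the pairs with `z₂ = w₂ = 0`, `|z₁| ≤ 1`, `|w₁| ≤ 1`. -/
theorem stmt_13 (lm : ℂ) (hl : ‖lm‖ = 1) (hl1 : lm ≠ 1) :
    ({p : (Fin 2 → ℂ) × (Fin 2 → ℂ) |
        (∑ i, ‖p.1 i‖ ^ 2 ≤ 1) ∧ (∑ j, ‖p.2 j‖ ^ 2 ≤ 1) ∧
        ∀ i j, p.1 i * p.2 j = ∑ k, ∑ l, uMat 0 lm (i, j) (k, l) * p.1 k * p.2 l}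
      = {p : (Fin 2 → ℂ) × (Fin 2 → ℂ) |
          (∑ i, ‖p.1 i‖ ^ 2 ≤ 1) ∧ (∑ j, ‖p.2 j‖ ^ 2 ≤ 1) ∧ p.1 1 * p.2 1 = 0}) ∧
    ({p : (Fin 2 → ℂ) × (Fin 2 → ℂ) |
        (∑ i, ‖p.1 i‖ ^ 2 ≤ 1) ∧ (∑ j, ‖p.2 j‖ ^ 2 ≤ 1) ∧
        (∀ i j, p.1 i * p.2 j = ∑ k, ∑ l, uMat 0 lm (i, j) (k, l) * p.1 k * p.2 l) ∧
        (∀ i j,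
          (Matrix.of fun k l =>
            uMat 0 lm (i, j) (k, l) - if (k, l) = (i, j) then 1 else 0) *ᵥ p.2 = 0 ∧
          (Matrix.of fun k l =>
            uMat 0 lm (i, j) (k, l) - if (k, l) = (i, j) then 1 else 0)ᵀ *ᵥ p.1 = 0)}
      = {p : (Fin 2 → ℂ) × (Fin 2 → ℂ) |
          p.1 1 = 0 ∧ p.2 1 = 0 ∧ ‖p.1 0‖ ≤ 1 ∧ ‖p.2 0‖ ≤ 1}) := by
  have hne : lm - 1 ≠ 0 := sub_ne_zero.mpr hl1
  have key : ∀ z w : Fin 2 → ℂ, z 1 * w 1 = 0 →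
      ∀ i j : Fin 2, z i * w j = ∑ k, ∑ l, uMat 0 lm (i, j) (k, l) * z k * w l := by
    intro z w hz i j
    fin_cases i <;> fin_cases j <;>
      simp [uMat, Fin.sum_univ_two, Prod.ext_iff, hz] <;>
      (rw [mul_eq_zero] at hz; tauto)
  constructor
  · ext ⟨z, w⟩
    simp only [Set.mem_setOf_eq]
    constructor
    · rintro ⟨h1, h2, h3⟩
      refine ⟨h1, h2, ?_⟩
      have := h3 1 1
      simp [uMat, Fin.sum_univ_two, Prod.ext_iff] at this
      rcases this with h' | h'
      · have hz : (lm - 1) * z 1 = 0 := by linear_combination -h'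
        rcases mul_eq_zero.mp hz with h'' | h''
        · exact absurd h'' hne
        · rw [h'', zero_mul]
      · rw [h', mul_zero]
    · rintro ⟨h1, h2, h3⟩
      exact ⟨h1, h2, key z w h3⟩
  · ext ⟨z, w⟩
    simp only [Set.mem_setOf_eq]
    constructor
    · rintro ⟨h1, h2, h3, h4⟩
      obtain ⟨hc1, hc2⟩ := h4 1 1
      have e1 := congrFun hc1 1
      have e2 := congrFun hc2 1
      simp [uMat, mulVec, dotProduct, Fin.sum_univ_two, Prod.ext_iff] at e1 e2
      have hw1 : w 1 = 0 := by tauto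
      have hz1 : z 1 = 0 := by tauto
      refine ⟨hz1, hw1, ?_, ?_⟩
      · rw [Fin.sum_univ_two, hz1] at h1
        simp only [norm_zero] at h1
        have : ‖z 0‖ ^ 2 ≤ 1 := by nlinarith
        exact pow_le_one_iff_of_nonneg (norm_nonneg _) two_ne_zero |>.mp this
      · rw [Fin.sum_univ_two, hw1] at h2
        simp only [norm_zero] at h2
        have : ‖w 0‖ ^ 2 ≤ 1 := by nlinarith
        exact pow_le_one_iff_of_nonneg (norm_nonneg _) two_ne_zero |>.mp this
    · rintro ⟨hz1, hw1, hz0, hw0⟩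
      have hzw : z 1 * w 1 = 0 := by rw [hz1, zero_mul]
      refine ⟨?_, ?_, key z w hzw, ?_⟩
      · rw [Fin.sum_univ_two, hz1]
        simp only [norm_zero]
        have : ‖z 0‖ ^ 2 ≤ 1 := pow_le_one₀ (norm_nonneg _) hz0
        nlinarith
      · rw [Fin.sum_univ_two, hw1]
        simp only [norm_zero]
        have : ‖w 0‖ ^ 2 ≤ 1 := pow_le_one₀ (norm_nonneg _) hw0
        nlinarith
      · intro i j
        constructor <;> (funext k; fin_cases i <;> fin_cases j <;> fin_cases k <;>
          simp [uMat, mulVec, dotProduct, Fin.sum_univ_two, Prod.ext_iff, hz1, hw1])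
end

section
/- Let 0 < a ≤ 1/√2 and λ ∈ ℂ with |λ| = 1 and λ ≠ 1, and let u = u(a,λ). Then Ω_u = {(z,w) ∈ ℂ²×ℂ² : ‖z‖ ≤ 1, ‖w‖ ≤ 1, a·z₁·w₁ + (1−a²)^{1/2}·z₂·w₂ = 0} and the core is Ω_u⁰ = {(0,0)}. -/
open Matrix

/-- for `u = u(a,λ)` with `0 < a ≤ 1/√2`, `Ω_u` consists of the pairs
`(z,w)` in the product of closed unit balls with `a·z₁·w₁ + (1−a²)^{1/2}·z₂·w₂ = 0`,
and the core is `{(0,0)}`. -/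
theorem stmt_14 (a : ℝ) (ha0 : 0 < a) (ha : a ≤ 1 / Real.sqrt 2)
    (lm : ℂ) (hl : ‖lm‖ = 1) (hl1 : lm ≠ 1) :
    ({p : (Fin 2 → ℂ) × (Fin 2 → ℂ) |
        (∑ i, ‖p.1 i‖ ^ 2 ≤ 1) ∧ (∑ j, ‖p.2 j‖ ^ 2 ≤ 1) ∧
        ∀ i j, p.1 i * p.2 j = ∑ k, ∑ l, uMat a lm (i, j) (k, l) * p.1 k * p.2 l}
      = {p : (Fin 2 → ℂ) × (Fin 2 → ℂ) |
          (∑ i, ‖p.1 i‖ ^ 2 ≤ 1) ∧ (∑ j, ‖p.2 j‖ ^ 2 ≤ 1) ∧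
          (a : ℂ) * p.1 0 * p.2 0 +
            (Real.sqrt (1 - a ^ 2) : ℂ) * p.1 1 * p.2 1 = 0}) ∧
    ({p : (Fin 2 → ℂ) × (Fin 2 → ℂ) |
        (∑ i, ‖p.1 i‖ ^ 2 ≤ 1) ∧ (∑ j, ‖p.2 j‖ ^ 2 ≤ 1) ∧
        (∀ i j, p.1 i * p.2 j = ∑ k, ∑ l, uMat a lm (i, j) (k, l) * p.1 k * p.2 l) ∧
        (∀ i j,
          (Matrix.of fun k l =>
            uMat a lm (i, j) (k, l) - if (k, l) = (i, j) then 1 else 0) *ᵥ p.2 = 0 ∧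
          (Matrix.of fun k l =>
            uMat a lm (i, j) (k, l) - if (k, l) = (i, j) then 1 else 0)ᵀ *ᵥ p.1 = 0)}
      = {((0 : Fin 2 → ℂ), (0 : Fin 2 → ℂ))}) := by
  have h2 : (0:ℝ) < Real.sqrt 2 := Real.sqrt_pos.mpr (by norm_num)
  have hsq : Real.sqrt 2 ^ 2 = 2 := Real.sq_sqrt (by norm_num)
  have h3 : a * Real.sqrt 2 ≤ 1 := by
    rw [le_div_iff₀ h2] at ha; exact ha
  have ha2 : a ^ 2 ≤ 1 / 2 := by nlinarith
  have hspos : 0 < Real.sqrt (1 - a ^ 2) := Real.sqrt_pos.mpr (by linarith)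
  have hS2 : ((Real.sqrt (1 - a ^ 2) : ℝ) : ℂ) ^ 2 = 1 - (a : ℂ) ^ 2 := by
    rw [← Complex.ofReal_pow, Real.sq_sqrt (by linarith : (0:ℝ) ≤ 1 - a ^ 2)]
    push_cast; ring
  have haR : a ≠ 0 := ha0.ne'
  have hsR : Real.sqrt (1 - a ^ 2) ≠ 0 := hspos.ne'
  have hA : (a : ℂ) ≠ 0 := by exact_mod_cast haR
  have hS : ((Real.sqrt (1 - a ^ 2) : ℝ) : ℂ) ≠ 0 := by exact_mod_cast hsR
  have hL : lm - 1 ≠ 0 := sub_ne_zero.mpr hl1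
  constructor
  · ext ⟨z, w⟩
    simp only [Set.mem_setOf_eq]
    refine and_congr_right fun _ => and_congr_right fun _ => ?_
    constructor
    · intro h
      have h00 := h 0 0
      simp [uMat, Fin.sum_univ_two, Prod.ext_iff] at h00
      have key : (lm - 1) * (a : ℂ) *
          ((a : ℂ) * z 0 * w 0 + ((Real.sqrt (1 - a ^ 2) : ℝ) : ℂ) * z 1 * w 1) = 0 := by
        linear_combination -h00
      rcases mul_eq_zero.mp key with hk | hk
      · exact absurd (mul_eq_zero.mp hk) (by tauto)
      · exact hk
    · intro hE i j
      fin_cases i <;> fin_cases j <;>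
        simp [uMat, Fin.sum_univ_two, Prod.ext_iff]
      · linear_combination -(lm - 1) * (a : ℂ) * hE
      · linear_combination (1 - lm) * ((Real.sqrt (1 - a ^ 2) : ℝ) : ℂ) * hE +
          (lm - 1) * z 1 * w 1 * hS2
  · ext ⟨z, w⟩
    simp only [Set.mem_setOf_eq, Set.mem_singleton_iff, Prod.mk.injEq]
    constructor
    · rintro ⟨-, -, -, hC⟩
      obtain ⟨hw, hz⟩ := hC 0 0
      have hw0 := congrFun hw 0
      have hw1 := congrFun hw 1
      have hz0 := congrFun hz 0
      have hz1 := congrFun hz 1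
      simp [uMat, mulVec, dotProduct, transpose, Fin.sum_univ_two, Prod.ext_iff,
        hL, haR, hsR] at hw0 hw1 hz0 hz1
      exact ⟨funext fun i => by fin_cases i <;> assumption,
             funext fun i => by fin_cases i <;> assumption⟩
    · rintro ⟨hz, hw⟩
      subst hz; subst hw
      refine ⟨by simp, by simp, fun i j => by simp [Fin.sum_univ_two], fun i j =>
        ⟨Matrix.mulVec_zero _, Matrix.mulVec_zero _⟩⟩
end

section
/- Let u be a 4×4 unitary complex matrix indexed by pairs (i,j) ∈ {1,2}×{1,2} with Ker(u − I) = {0}. Then Ω_u = (B̄₂ × {0}) ∪ ({0} × B̄₂), where B̄₂ is the closed Euclidean unit ball of ℂ², and the core is Ω_u⁰ = {(0,0)}. -/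
open Matrix

private lemma aux_ker {u : Matrix (Fin 2 × Fin 2) (Fin 2 × Fin 2) ℂ}
    (hker : LinearMap.ker (Matrix.mulVecLin (u - 1)) = ⊥)
    (v : Fin 2 × Fin 2 → ℂ) (hv : (u - 1) *ᵥ v = 0) : v = 0 := by
  have hmem : v ∈ LinearMap.ker (Matrix.mulVecLin (u - 1)) := by
    rw [LinearMap.mem_ker, Matrix.mulVecLin_apply]; exact hv
  rw [hker] at hmem
  simpa using hmem

private lemma aux_comp {u : Matrix (Fin 2 × Fin 2) (Fin 2 × Fin 2) ℂ}
    (v : Fin 2 × Fin 2 → ℂ) (i j : Fin 2) :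
    ((u - 1) *ᵥ v) (i, j)
      = (∑ k, ∑ l, u (i, j) (k, l) * v (k, l)) - v (i, j) := by
  simp [Matrix.mulVec, dotProduct, Matrix.sub_apply, Matrix.one_apply,
    Fintype.sum_prod_type, sub_mul, ite_mul, Finset.sum_sub_distrib,
    Finset.sum_ite_eq, Prod.ext_iff]
  fin_cases i <;> fin_cases j <;> simp

private lemma aux_dichotomy (u : Matrix (Fin 2 × Fin 2) (Fin 2 × Fin 2) ℂ)
    (hker : LinearMap.ker (Matrix.mulVecLin (u - 1)) = ⊥)
    (z w : Fin 2 → ℂ)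
    (h : ∀ i j, z i * w j = ∑ k, ∑ l, u (i, j) (k, l) * z k * w l) :
    z = 0 ∨ w = 0 := by
  have hv : (fun p : Fin 2 × Fin 2 => z p.1 * w p.2) = 0 := by
    apply aux_ker hker
    funext p
    obtain ⟨i, j⟩ := p
    rw [Pi.zero_apply, aux_comp, sub_eq_zero]
    simp only [mul_assoc] at h
    exact (h i j).symm
  by_cases hz : z = 0
  · exact Or.inl hz
  · right
    obtain ⟨k, hk⟩ := Function.ne_iff.mp hz
    funext l
    have := congrFun hv (k, l)
    simp at this
    rcases this with h1 | h1
    · exact absurd h1 hk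
    · exact h1

private lemma aux_z {u : Matrix (Fin 2 × Fin 2) (Fin 2 × Fin 2) ℂ}
    (hker : LinearMap.ker (Matrix.mulVecLin (u - 1)) = ⊥) (z : Fin 2 → ℂ)
    (h : ∀ i j, (Matrix.of fun k l =>
        u (i, j) (k, l) - if (k, l) = (i, j) then 1 else 0)ᵀ *ᵥ z = 0) :
    z = 0 := by
  have hx : (fun p : Fin 2 × Fin 2 => if p.2 = (0 : Fin 2) then z p.1 else 0) = 0 := by
    apply aux_ker hker
    funext p
    obtain ⟨a, b⟩ := p
    rw [Pi.zero_apply, aux_comp, sub_eq_zero]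
    have hab := congrFun (h a b) 0
    simp only [Matrix.mulVec, dotProduct, Matrix.transpose_apply, Matrix.of_apply,
      sub_mul, Finset.sum_sub_distrib, Pi.zero_apply, sub_eq_zero] at hab
    simp only [mul_ite, mul_zero, Finset.sum_ite_eq', Finset.mem_univ, if_true]
    rw [hab]
    fin_cases b <;> simp [Prod.ext_iff, ite_mul]
  funext i
  simpa using congrFun hx (i, 0)

private lemma aux_w {u : Matrix (Fin 2 × Fin 2) (Fin 2 × Fin 2) ℂ}
    (hker : LinearMap.ker (Matrix.mulVecLin (u - 1)) = ⊥) (w : Fin 2 → ℂ)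
    (h : ∀ i j, (Matrix.of fun k l =>
        u (i, j) (k, l) - if (k, l) = (i, j) then 1 else 0) *ᵥ w = 0) :
    w = 0 := by
  have hx : (fun p : Fin 2 × Fin 2 => if p.1 = (0 : Fin 2) then w p.2 else 0) = 0 := by
    apply aux_ker hker
    funext p
    obtain ⟨a, b⟩ := p
    rw [Pi.zero_apply, aux_comp, sub_eq_zero]
    have hab := congrFun (h a b) 0
    simp only [Matrix.mulVec, dotProduct, Matrix.of_apply,
      sub_mul, Finset.sum_sub_distrib, Pi.zero_apply, sub_eq_zero] at hab
    simp only [mul_ite, mul_zero]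
    rw [Finset.sum_comm]
    simp only [Finset.sum_ite_eq', Finset.mem_univ, if_true]
    rw [hab]
    fin_cases a <;> simp [Prod.ext_iff, ite_mul]
  funext j
  simpa using congrFun hx (0, j)

/-- if `Ker(u − I) = {0}` then `Ω_u = (B̄₂ × {0}) ∪ ({0} × B̄₂)` and the
core is `{(0,0)}`. -/
theorem stmt_15 (u : Matrix (Fin 2 × Fin 2) (Fin 2 × Fin 2) ℂ)
    (hu : u ∈ Matrix.unitaryGroup (Fin 2 × Fin 2) ℂ)
    (hker : LinearMap.ker (Matrix.mulVecLin (u - 1)) = ⊥) :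
    ({p : (Fin 2 → ℂ) × (Fin 2 → ℂ) |
        (∑ i, ‖p.1 i‖ ^ 2 ≤ 1) ∧ (∑ j, ‖p.2 j‖ ^ 2 ≤ 1) ∧
        ∀ i j, p.1 i * p.2 j = ∑ k, ∑ l, u (i, j) (k, l) * p.1 k * p.2 l}
      = {p : (Fin 2 → ℂ) × (Fin 2 → ℂ) |
          ((∑ i, ‖p.1 i‖ ^ 2 ≤ 1) ∧ p.2 = 0) ∨
          (p.1 = 0 ∧ (∑ j, ‖p.2 j‖ ^ 2 ≤ 1))}) ∧
    ({p : (Fin 2 → ℂ) × (Fin 2 → ℂ) |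
        (∑ i, ‖p.1 i‖ ^ 2 ≤ 1) ∧ (∑ j, ‖p.2 j‖ ^ 2 ≤ 1) ∧
        (∀ i j, p.1 i * p.2 j = ∑ k, ∑ l, u (i, j) (k, l) * p.1 k * p.2 l) ∧
        (∀ i j,
          (Matrix.of fun k l =>
            u (i, j) (k, l) - if (k, l) = (i, j) then 1 else 0) *ᵥ p.2 = 0 ∧
          (Matrix.of fun k l =>
            u (i, j) (k, l) - if (k, l) = (i, j) then 1 else 0)ᵀ *ᵥ p.1 = 0)}
      = {((0 : Fin 2 → ℂ), (0 : Fin 2 → ℂ))}) := by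
  constructor
  · ext ⟨z, w⟩
    simp only [Set.mem_setOf_eq]
    constructor
    · rintro ⟨h1, h2, h3⟩
      rcases aux_dichotomy u hker z w h3 with hz | hw
      · exact Or.inr ⟨hz, h2⟩
      · exact Or.inl ⟨h1, hw⟩
    · rintro (⟨h1, h2⟩ | ⟨h1, h2⟩)
      · subst h2; exact ⟨h1, by simp, by simp⟩
      · subst h1; exact ⟨by simp, h2, by simp⟩
  · ext ⟨z, w⟩
    constructor
    · rintro ⟨-, -, -, h4⟩
      have hz : z = 0 := aux_z hker z (fun i j => (h4 i j).2)
      have hw : w = 0 := aux_w hker w (fun i j => (h4 i j).1)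
      subst hz; subst hw; rfl
    · intro h
      rw [Set.mem_singleton_iff] at h
      obtain ⟨hz, hw⟩ := Prod.mk.injEq .. ▸ h
      subst hz; subst hw
      refine ⟨by simp, by simp, by simp, fun i j => ⟨?_, ?_⟩⟩ <;> simp
end

section
/- Let u be a 4×4 unitary complex matrix indexed by pairs (i,j) ∈ {1,2}×{1,2} with dim_ℂ Ker(u − I) = 1, and let the nonzero vector with coordinates (a,b,c,d) (in the lexicographic order (1,1),(1,2),(2,1),(2,2)) span Ker(u − I). Then: (1) the core Ω_u⁰ = {(0,0)}; (2) if a·d ≠ b·c then Ω_u = (B̄₂ × {0}) ∪ ({0} × B̄₂); (3) if a·d = b·c then Ω_u contains a point (z,w) with z ≠ 0 and w ≠ 0. -/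
open Matrix

private lemma ker_iff_16 (u : Matrix (Fin 2 × Fin 2) (Fin 2 × Fin 2) ℂ) (v : Fin 2 × Fin 2 → ℂ) :
    v ∈ LinearMap.ker (Matrix.mulVecLin (u - 1)) ↔
      ∀ p : Fin 2 × Fin 2, ∑ q : Fin 2 × Fin 2, u p q * v q = v p := by
  rw [LinearMap.mem_ker]
  constructor
  · intro h p
    have := congrFun h p
    simp only [mulVecLin_apply, mulVec, dotProduct, Matrix.sub_apply, Matrix.one_apply,
      sub_mul, Finset.sum_sub_distrib, Pi.zero_apply, ite_mul, one_mul, zero_mul,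
      Finset.sum_ite_eq, Finset.mem_univ, if_true] at this
    linear_combination this
  · intro h
    funext p
    simp only [mulVecLin_apply, mulVec, dotProduct, Matrix.sub_apply, Matrix.one_apply,
      sub_mul, Finset.sum_sub_distrib, Pi.zero_apply, ite_mul, one_mul, zero_mul,
      Finset.sum_ite_eq, Finset.mem_univ, if_true, h p, sub_self]

private lemma row_eq_16 (u : Matrix (Fin 2 × Fin 2) (Fin 2 × Fin 2) ℂ) (w : Fin 2 → ℂ) (i j : Fin 2)
    (h : (Matrix.of fun k l => u (i, j) (k, l) - if k = i ∧ l = j then 1 else 0) *ᵥ w = 0) :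
    ∀ k, ∑ l, u (i, j) (k, l) * w l = if k = i then w j else 0 := by
  intro k
  have h2 := congrFun h k
  simp only [mulVec, dotProduct, of_apply, Pi.zero_apply, sub_mul, Finset.sum_sub_distrib,
    Prod.mk.injEq, ite_mul, one_mul, zero_mul] at h2
  by_cases hk : k = i
  · subst hk
    simp only [true_and, Finset.sum_ite_eq', Finset.mem_univ, if_true, if_pos rfl] at h2 ⊢
    linear_combination h2
  · simp only [hk, false_and, if_false, Finset.sum_const_zero, sub_zero] at h2 ⊢
    exact h2

private lemma col_eq_16 (u : Matrix (Fin 2 × Fin 2) (Fin 2 × Fin 2) ℂ) (z : Fin 2 → ℂ) (i j : Fin 2)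
    (h : (Matrix.of fun k l => u (i, j) (k, l) - if k = i ∧ l = j then 1 else 0)ᵀ *ᵥ z = 0) :
    ∀ l, ∑ k, u (i, j) (k, l) * z k = if l = j then z i else 0 := by
  intro l
  have h2 := congrFun h l
  simp only [mulVec, dotProduct, transpose_apply, of_apply, Pi.zero_apply, sub_mul,
    Finset.sum_sub_distrib, Prod.mk.injEq, ite_mul, one_mul, zero_mul] at h2
  by_cases hl : l = j
  · subst hl
    simp only [and_true, Finset.sum_ite_eq', Finset.mem_univ, if_true, if_pos rfl] at h2 ⊢
    linear_combination h2
  · simp only [hl, and_false, if_false, Finset.sum_const_zero, sub_zero] at h2 ⊢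
    exact h2

private lemma tensor_16 (a b c d : ℂ) (had : a * d = b * c)
    (h : a ≠ 0 ∨ b ≠ 0 ∨ c ≠ 0 ∨ d ≠ 0) :
    ∃ z w : Fin 2 → ℂ, z ≠ 0 ∧ w ≠ 0 ∧ z 0 * w 0 = a ∧ z 0 * w 1 = b ∧
      z 1 * w 0 = c ∧ z 1 * w 1 = d := by
  rcases h with h | h | h | h
  · refine ⟨![a, c], ![1, b / a], fun hz => h (by simpa using congrFun hz 0),
      fun hw => one_ne_zero (α := ℂ) (by simpa using congrFun hw 0), ?_, ?_, ?_, ?_⟩ <;>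
      simp only [Matrix.cons_val_zero, Matrix.cons_val_one, Matrix.head_cons]
    · ring
    · field_simp
    · ring
    · field_simp
      linear_combination -had
  · refine ⟨![b, d], ![a / b, 1], fun hz => h (by simpa using congrFun hz 0),
      fun hw => one_ne_zero (α := ℂ) (by simpa using congrFun hw 1), ?_, ?_, ?_, ?_⟩ <;>
      simp only [Matrix.cons_val_zero, Matrix.cons_val_one, Matrix.head_cons]
    · field_simp
    · ring
    · field_simp
      linear_combination had
    · ring
  · refine ⟨![a, c], ![1, d / c], fun hz => h (by simpa using congrFun hz 1),
      fun hw => one_ne_zero (α := ℂ) (by simpa using congrFun hw 0), ?_, ?_, ?_, ?_⟩ <;>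
      simp only [Matrix.cons_val_zero, Matrix.cons_val_one, Matrix.head_cons]
    · ring
    · field_simp
      linear_combination had
    · ring
    · field_simp
  · refine ⟨![b, d], ![c / d, 1], fun hz => h (by simpa using congrFun hz 1),
      fun hw => one_ne_zero (α := ℂ) (by simpa using congrFun hw 1), ?_, ?_, ?_, ?_⟩ <;>
      simp only [Matrix.cons_val_zero, Matrix.cons_val_one, Matrix.head_cons]
    · field_simp
      linear_combination -had
    · ring
    · field_simp
    · ring

/-- case `dim Ker(u − I) = 1`, with `Ker(u − I)` spanned by the nonzero
vector `x = (a,b,c,d)`: the core is `{(0,0)}`; if `ad ≠ bc` then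
`Ω_u = (B̄₂×{0}) ∪ ({0}×B̄₂)`; and if `ad = bc` then `Ω_u` contains a point `(z,w)`
with `z ≠ 0` and `w ≠ 0`. -/
theorem stmt_16 (u : Matrix (Fin 2 × Fin 2) (Fin 2 × Fin 2) ℂ)
    (hu : u ∈ Matrix.unitaryGroup (Fin 2 × Fin 2) ℂ)
    (hker : Module.finrank ℂ (LinearMap.ker (Matrix.mulVecLin (u - 1))) = 1)
    (x : Fin 2 × Fin 2 → ℂ) (hx : x ≠ 0)
    (hspan : Submodule.span ℂ {x} = LinearMap.ker (Matrix.mulVecLin (u - 1))) :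
    ({p : (Fin 2 → ℂ) × (Fin 2 → ℂ) |
        (∑ i, ‖p.1 i‖ ^ 2 ≤ 1) ∧ (∑ j, ‖p.2 j‖ ^ 2 ≤ 1) ∧
        (∀ i j, p.1 i * p.2 j = ∑ k, ∑ l, u (i, j) (k, l) * p.1 k * p.2 l) ∧
        (∀ i j,
          (Matrix.of fun k l =>
            u (i, j) (k, l) - if (k, l) = (i, j) then 1 else 0) *ᵥ p.2 = 0 ∧
          (Matrix.of fun k l =>
            u (i, j) (k, l) - if (k, l) = (i, j) then 1 else 0)ᵀ *ᵥ p.1 = 0)}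
      = {((0 : Fin 2 → ℂ), (0 : Fin 2 → ℂ))}) ∧
    (x (0, 0) * x (1, 1) ≠ x (0, 1) * x (1, 0) →
      {p : (Fin 2 → ℂ) × (Fin 2 → ℂ) |
          (∑ i, ‖p.1 i‖ ^ 2 ≤ 1) ∧ (∑ j, ‖p.2 j‖ ^ 2 ≤ 1) ∧
          ∀ i j, p.1 i * p.2 j = ∑ k, ∑ l, u (i, j) (k, l) * p.1 k * p.2 l}
        = {p : (Fin 2 → ℂ) × (Fin 2 → ℂ) |
            ((∑ i, ‖p.1 i‖ ^ 2 ≤ 1) ∧ p.2 = 0) ∨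
            (p.1 = 0 ∧ (∑ j, ‖p.2 j‖ ^ 2 ≤ 1))}) ∧
    (x (0, 0) * x (1, 1) = x (0, 1) * x (1, 0) →
      ∃ p : (Fin 2 → ℂ) × (Fin 2 → ℂ),
        (∑ i, ‖p.1 i‖ ^ 2 ≤ 1) ∧ (∑ j, ‖p.2 j‖ ^ 2 ≤ 1) ∧
        (∀ i j, p.1 i * p.2 j = ∑ k, ∑ l, u (i, j) (k, l) * p.1 k * p.2 l) ∧
        p.1 ≠ 0 ∧ p.2 ≠ 0) := by
  classical
  have hmem : ∀ v : Fin 2 × Fin 2 → ℂ,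
      (∀ p : Fin 2 × Fin 2, ∑ q : Fin 2 × Fin 2, u p q * v q = v p) → ∃ c : ℂ, v = c • x := by
    intro v hv
    have : v ∈ Submodule.span ℂ {x} := by
      rw [hspan, ker_iff_16]; exact hv
    obtain ⟨c, hc⟩ := Submodule.mem_span_singleton.mp this
    exact ⟨c, hc.symm⟩
  have hxker : x ∈ LinearMap.ker (Matrix.mulVecLin (u - 1)) := by
    rw [← hspan]; exact Submodule.mem_span_singleton_self x
  have hux : ∀ p : Fin 2 × Fin 2, ∑ q : Fin 2 × Fin 2, u p q * x q = x p :=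
    (ker_iff_16 u x).mp hxker
  refine ⟨?_, ?_, ?_⟩
  · -- part 1 : core = {(0,0)}
    ext p
    obtain ⟨z, w⟩ := p
    simp only [Set.mem_setOf_eq, Set.mem_singleton_iff, Prod.mk.injEq]
    constructor
    · rintro ⟨hz1, hw1, heq, hcore⟩
      have hw : ∀ i j k, ∑ l, u (i, j) (k, l) * w l = if k = i then w j else 0 :=
        fun i j => row_eq_16 u w i j (hcore i j).1
      have hz : ∀ i j l, ∑ k, u (i, j) (k, l) * z k = if l = j then z i else 0 :=
        fun i j => col_eq_16 u z i j (hcore i j).2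
      have hw0 : w = 0 := by
        by_contra hw0
        obtain ⟨l₀, hl₀⟩ := Function.ne_iff.mp hw0
        simp only [Pi.zero_apply] at hl₀
        have key : ∀ e : Fin 2 → ℂ, ∃ c : ℂ, (fun q : Fin 2 × Fin 2 => e q.1 * w q.2) = c • x := by
          intro e
          apply hmem
          rintro ⟨i, j⟩
          rw [Fintype.sum_prod_type]
          have h1 : ∀ k, ∑ l, u (i, j) (k, l) * (e k * w l)
              = e k * ∑ l, u (i, j) (k, l) * w l := by
            intro k; rw [Finset.mul_sum]; exact Finset.sum_congr rfl fun l _ => by ring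
          simp_rw [h1, hw i j, mul_ite, mul_zero]
          simp [Finset.sum_ite_eq']
        obtain ⟨c₀, hc₀⟩ := key ![1, 0]
        obtain ⟨c₁, hc₁⟩ := key ![0, 1]
        have e0 : w l₀ = c₀ * x (0, l₀) := by simpa using congrFun hc₀ (0, l₀)
        have e1 : c₀ * x (1, l₀) = 0 := by simpa using (congrFun hc₀ (1, l₀)).symm
        have e2 : w l₀ = c₁ * x (1, l₀) := by simpa using congrFun hc₁ (1, l₀)
        have hx1 : x (1, l₀) ≠ 0 := fun h => hl₀ (by rw [e2, h, mul_zero])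
        rcases mul_eq_zero.mp e1 with h | h
        · exact hl₀ (by rw [e0, h, zero_mul])
        · exact hx1 h
      have hz0 : z = 0 := by
        by_contra hz0
        obtain ⟨k₀, hk₀⟩ := Function.ne_iff.mp hz0
        simp only [Pi.zero_apply] at hk₀
        have key : ∀ e : Fin 2 → ℂ, ∃ c : ℂ, (fun q : Fin 2 × Fin 2 => z q.1 * e q.2) = c • x := by
          intro e
          apply hmem
          rintro ⟨i, j⟩
          rw [Fintype.sum_prod_type_right]
          have h1 : ∀ l, ∑ k, u (i, j) (k, l) * (z k * e l)
              = (∑ k, u (i, j) (k, l) * z k) * e l := by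
            intro l; rw [Finset.sum_mul]; exact Finset.sum_congr rfl fun k _ => by ring
          simp_rw [h1, hz i j, ite_mul, zero_mul]
          simp [Finset.sum_ite_eq']
        obtain ⟨c₀, hc₀⟩ := key ![1, 0]
        obtain ⟨c₁, hc₁⟩ := key ![0, 1]
        have e0 : z k₀ = c₀ * x (k₀, 0) := by simpa using congrFun hc₀ (k₀, 0)
        have e1 : c₀ * x (k₀, 1) = 0 := by simpa using (congrFun hc₀ (k₀, 1)).symm
        have e2 : z k₀ = c₁ * x (k₀, 1) := by simpa using congrFun hc₁ (k₀, 1)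
        have hx1 : x (k₀, 1) ≠ 0 := fun h => hk₀ (by rw [e2, h, mul_zero])
        rcases mul_eq_zero.mp e1 with h | h
        · exact hk₀ (by rw [e0, h, zero_mul])
        · exact hx1 h
      exact ⟨hz0, hw0⟩
    · rintro ⟨hz0, hw0⟩
      subst hz0; subst hw0
      refine ⟨by simp, by simp, by simp, fun i j => ⟨?_, ?_⟩⟩ <;>
        simp [Matrix.mulVec_zero]
  · -- part 2
    intro had
    ext p
    obtain ⟨z, w⟩ := p
    simp only [Set.mem_setOf_eq]
    constructor
    · rintro ⟨hz1, hw1, heq⟩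
      have hv : ∀ p : Fin 2 × Fin 2,
          ∑ q : Fin 2 × Fin 2, u p q * (z q.1 * w q.2) = z p.1 * w p.2 := by
        rintro ⟨i, j⟩
        rw [Fintype.sum_prod_type]
        rw [show z (i, j).1 * w (i, j).2 = z i * w j from rfl, heq i j]
        exact Finset.sum_congr rfl fun k _ => Finset.sum_congr rfl fun l _ => by ring
      obtain ⟨c, hc⟩ := hmem _ hv
      have ev : ∀ k l, z k * w l = c * x (k, l) := by
        intro k l
        have := congrFun hc (k, l)
        simpa using this
      have hc0 : c = 0 := by
        by_contra h
        apply had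
        have key : c ^ 2 * (x (0, 0) * x (1, 1)) = c ^ 2 * (x (0, 1) * x (1, 0)) := by
          have e1 := ev 0 0
          have e2 := ev 1 1
          have e3 := ev 0 1
          have e4 := ev 1 0
          linear_combination (-(z 1 * w 1)) * e1 - (c * x (0, 0)) * e2 + (z 1 * w 0) * e3
            + (c * x (0, 1)) * e4
        exact mul_left_cancel₀ (pow_ne_zero 2 h) key
      have ev0 : ∀ k l, z k * w l = 0 := by
        intro k l; rw [ev k l, hc0, zero_mul]
      by_cases hz0 : z = 0
      · exact Or.inr ⟨hz0, hw1⟩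
      · obtain ⟨k, hk⟩ := Function.ne_iff.mp hz0
        simp only [Pi.zero_apply] at hk
        refine Or.inl ⟨hz1, funext fun l => ?_⟩
        rcases mul_eq_zero.mp (ev0 k l) with h | h
        · exact absurd h hk
        · exact h
    · rintro (⟨hz1, hw0⟩ | ⟨hz0, hw1⟩)
      · subst hw0
        exact ⟨hz1, by simp, fun i j => by simp⟩
      · subst hz0
        exact ⟨by simp, hw1, fun i j => by simp⟩
  · -- part 3
    intro had
    have h4 : x (0, 0) ≠ 0 ∨ x (0, 1) ≠ 0 ∨ x (1, 0) ≠ 0 ∨ x (1, 1) ≠ 0 := by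
      by_contra h
      push_neg at h
      obtain ⟨h1, h2, h3, h4⟩ := h
      apply hx
      funext q
      obtain ⟨i, j⟩ := q
      fin_cases i <;> fin_cases j <;> assumption
    obtain ⟨z, w, hz0, hw0, e1, e2, e3, e4⟩ :=
      tensor_16 (x (0, 0)) (x (0, 1)) (x (1, 0)) (x (1, 1)) had h4
    have hzx : ∀ k l, z k * w l = x (k, l) := by
      intro k l
      fin_cases k <;> fin_cases l <;> first | exact e1 | exact e2 | exact e3 | exact e4
    set S : ℝ := ∑ i, ‖z i‖ ^ 2 with hS
    set T : ℝ := ∑ j, ‖w j‖ ^ 2 with hT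
    have hS0 : 0 ≤ S := Finset.sum_nonneg fun i _ => sq_nonneg _
    have hT0 : 0 ≤ T := Finset.sum_nonneg fun j _ => sq_nonneg _
    set s : ℝ := (1 + S)⁻¹ with hsdef
    set t : ℝ := (1 + T)⁻¹ with htdef
    have h1S : (0 : ℝ) < 1 + S := by linarith
    have h1T : (0 : ℝ) < 1 + T := by linarith
    have hs0 : 0 < s := inv_pos.mpr h1S
    have ht0 : 0 < t := inv_pos.mpr h1T
    have hsS : s * (1 + S) = 1 := inv_mul_cancel₀ (ne_of_gt h1S)
    have htT : t * (1 + T) = 1 := inv_mul_cancel₀ (ne_of_gt h1T)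
    refine ⟨⟨fun i => (s : ℂ) * z i, fun j => (t : ℂ) * w j⟩, ?_, ?_, ?_, ?_, ?_⟩
    · have : ∑ i, ‖(s : ℂ) * z i‖ ^ 2 = s ^ 2 * S := by
        rw [hS, Finset.mul_sum]
        refine Finset.sum_congr rfl fun i _ => ?_
        rw [norm_mul, mul_pow, Complex.norm_real, Real.norm_eq_abs, abs_of_pos hs0]
      rw [this]
      nlinarith [sq_nonneg s, mul_pos hs0 hs0]
    · have : ∑ j, ‖(t : ℂ) * w j‖ ^ 2 = t ^ 2 * T := by
        rw [hT, Finset.mul_sum]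
        refine Finset.sum_congr rfl fun j _ => ?_
        rw [norm_mul, mul_pow, Complex.norm_real, Real.norm_eq_abs, abs_of_pos ht0]
      rw [this]
      nlinarith [sq_nonneg t, mul_pos ht0 ht0]
    · intro i j
      have h2 : (∑ k, ∑ l, u (i, j) (k, l) * ((s : ℂ) * z k) * ((t : ℂ) * w l))
          = (s : ℂ) * (t : ℂ) * ∑ q : Fin 2 × Fin 2, u (i, j) q * x q := by
        rw [Fintype.sum_prod_type, Finset.mul_sum]
        refine Finset.sum_congr rfl fun k _ => ?_
        rw [Finset.mul_sum]
        refine Finset.sum_congr rfl fun l _ => ?_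
        rw [← hzx k l]; ring
      show ((s : ℂ) * z i) * ((t : ℂ) * w j) = _
      rw [h2, hux (i, j), ← hzx i j]
      ring
    · intro hh
      obtain ⟨k, hk⟩ := Function.ne_iff.mp hz0
      simp only [Pi.zero_apply] at hk
      have := congrFun hh k
      simp only [Pi.zero_apply] at this
      rcases mul_eq_zero.mp this with h | h
      · exact (Complex.ofReal_ne_zero.mpr (ne_of_gt hs0)) h
      · exact hk h
    · intro hh
      obtain ⟨l, hl⟩ := Function.ne_iff.mp hw0
      simp only [Pi.zero_apply] at hl
      have := congrFun hh l
      simp only [Pi.zero_apply] at this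
      rcases mul_eq_zero.mp this with h | h
      · exact (Complex.ofReal_ne_zero.mpr (ne_of_gt ht0)) h
      · exact hl h
end
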